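/- arXiv:2409.18451 — 9 statements merged into one kernel-verified Lean document; each statement's English description precedes it below -/
import Mathlib

section
/- Let X ⊆ ℝⁿ be compact and let f : ℝⁿ → ℝ be continuous on X. Suppose the following condition holds: whenever a point x ∈ X can be written as x = Σᵢ₌₁ᵏ λᵢ xᵢ with λ ∈ Δ_k and xᵢ ∈ X for i = 1,…,k, one has f(x) ≥ Σᵢ₌₁ᵏ λᵢ f(xᵢ). Then there exists a concave tent of f over X; indeed the function g(x) := sup{ Σᵢ₌₁^{n+2} λᵢ f(xᵢ) : λ ∈ Δ_{n+2}, xᵢ ∈ X, Σᵢ₌₁^{n+2} λᵢ xᵢ = x } is concave on conv(X) and agrees with f on X. -/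
open Finset Module

lemma pad_sum' {M : Type*} [AddCommMonoid M] {m N : ℕ} (hm : m ≤ N) (u : Fin m → M) :
    (∑ j : Fin N, if h : (j : ℕ) < m then u ⟨j, h⟩ else 0) = ∑ i, u i := by
  have h1 : (∑ j : Fin N, if h : (j : ℕ) < m then u ⟨j, h⟩ else 0)
      = ∑ j ∈ range N, (fun i => if h : i < m then u ⟨i, h⟩ else 0) j :=
    Fin.sum_univ_eq_sum_range (fun i => if h : i < m then u ⟨i, h⟩ else 0) N
  have h3 : ∑ j ∈ range N, (fun i => if h : i < m then u ⟨i, h⟩ else 0) j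
      = ∑ j ∈ range m, (fun i => if h : i < m then u ⟨i, h⟩ else 0) j := by
    refine (Finset.sum_subset (Finset.range_subset_range.2 hm) ?_).symm
    intro i _ hi
    simp only [Finset.mem_range, not_lt] at hi
    simp [Nat.not_lt.2 hi]
  have h2 : (∑ j : Fin m, (fun i => if h : i < m then u ⟨i, h⟩ else 0) (j : ℕ))
      = ∑ j ∈ range m, (fun i => if h : i < m then u ⟨i, h⟩ else 0) j :=
    Fin.sum_univ_eq_sum_range (fun i => if h : i < m then u ⟨i, h⟩ else 0) m
  rw [h1, h3, ← h2]
  exact Finset.sum_congr rfl fun i _ => by simp [i.isLt]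

lemma key_caratheodory {n : ℕ} {X : Set (Fin n → ℝ)} (f : (Fin n → ℝ) → ℝ) {ι : Type*} [Fintype ι]
    (lam : ι → ℝ) (xs : ι → (Fin n → ℝ)) (h0 : ∀ i, 0 ≤ lam i) (h1 : ∑ i, lam i = 1)
    (hX : ∀ i, xs i ∈ X) :
    ∃ (mu : Fin (n + 2) → ℝ) (ys : Fin (n + 2) → (Fin n → ℝ)),
      (∀ i, 0 ≤ mu i) ∧ ∑ i, mu i = 1 ∧ (∀ i, ys i ∈ X) ∧
      ∑ i, mu i • ys i = ∑ i, lam i • xs i ∧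
      ∑ i, mu i * f (ys i) = ∑ i, lam i * f (xs i) := by
  rcases isEmpty_or_nonempty ι with hι | hι
  · simp at h1
  set x0 := xs (Classical.arbitrary ι) with hx0
  have hx0X : x0 ∈ X := hX _
  set φ : (Fin n → ℝ) → (Fin n → ℝ) × ℝ := fun p => (p, f p) with hφ
  set z : (Fin n → ℝ) × ℝ := ∑ i, lam i • φ (xs i) with hzdef
  have hz : z ∈ convexHull ℝ (φ '' X) :=
    mem_convexHull_of_exists_fintype lam (fun i => φ (xs i)) h0 h1
      (fun i => ⟨xs i, hX i, rfl⟩) rfl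
  obtain ⟨κ, hκ, zf, w, hrange, hai, hw0, hw1, hwz⟩ :=
    eq_pos_convex_span_of_mem_convexHull hz
  letI := hκ
  have hcard : Fintype.card κ ≤ n + 2 := by
    have hc := hai.card_le_finrank_succ
    have hle : finrank ℝ (vectorSpan ℝ (Set.range zf)) ≤ finrank ℝ ((Fin n → ℝ) × ℝ) :=
      Submodule.finrank_le _
    have hfr : finrank ℝ ((Fin n → ℝ) × ℝ) = n + 1 := by
      simp [Module.finrank_prod]
    omega
  set m := Fintype.card κ with hm
  set e : κ ≃ Fin m := Fintype.equivFin κ with he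
  have hfst : ∀ i : κ, (zf i).1 ∈ X ∧ f ((zf i).1) = (zf i).2 := by
    intro i
    obtain ⟨p, hp, hpe⟩ := hrange ⟨i, rfl⟩
    constructor
    · rw [← hpe]; exact hp
    · rw [← hpe]
  set mu : Fin (n + 2) → ℝ := fun j => if h : (j : ℕ) < m then w (e.symm ⟨j, h⟩) else 0 with hmu
  set ys : Fin (n + 2) → (Fin n → ℝ) :=
    fun j => if h : (j : ℕ) < m then (zf (e.symm ⟨j, h⟩)).1 else x0 with hys
  refine ⟨mu, ys, ?_, ?_, ?_, ?_, ?_⟩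
  · intro j
    simp only [hmu]
    split
    · exact (hw0 _).le
    · exact le_refl 0
  · simp only [hmu]
    rw [pad_sum' hcard (fun i : Fin m => w (e.symm i)), Equiv.sum_comp e.symm w]
    exact hw1
  · intro j
    simp only [hys]
    split
    · exact (hfst _).1
    · exact hx0X
  · have heq : ∀ j : Fin (n + 2), mu j • ys j
        = if h : (j : ℕ) < m then w (e.symm ⟨j, h⟩) • (zf (e.symm ⟨j, h⟩)).1 else 0 := by
      intro j
      simp only [hmu, hys]
      split
      · rfl
      · simp
    rw [Finset.sum_congr rfl fun j _ => heq j,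
      pad_sum' hcard (fun i : Fin m => w (e.symm i) • (zf (e.symm i)).1),
      Equiv.sum_comp e.symm (fun i => w i • (zf i).1)]
    have h5 := congrArg Prod.fst hwz
    simp only [Prod.fst_sum, Prod.smul_fst] at h5
    have hz1 : z.1 = ∑ i, lam i • xs i := by
      rw [hzdef]; simp only [Prod.fst_sum, Prod.smul_fst]; rfl
    exact h5.trans hz1
  · have heq : ∀ j : Fin (n + 2), mu j * f (ys j)
        = if h : (j : ℕ) < m then w (e.symm ⟨j, h⟩) * (zf (e.symm ⟨j, h⟩)).2 else 0 := by
      intro j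
      simp only [hmu, hys]
      split
      · rw [(hfst _).2]
      · simp
    rw [Finset.sum_congr rfl fun j _ => heq j,
      pad_sum' hcard (fun i : Fin m => w (e.symm i) * (zf (e.symm i)).2),
      Equiv.sum_comp e.symm (fun i => w i * (zf i).2)]
    have h5 := congrArg Prod.snd hwz
    simp only [Prod.snd_sum, Prod.smul_snd, smul_eq_mul] at h5
    have hz2 : z.2 = ∑ i, lam i * f (xs i) := by
      rw [hzdef]; simp only [Prod.snd_sum, Prod.smul_snd, smul_eq_mul]; rfl
    exact h5.trans hz2

/-- The set of values of convex combinations over `X` representing `x`. -/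
def tentSet (n : ℕ) (X : Set (Fin n → ℝ)) (f : (Fin n → ℝ) → ℝ) (x : Fin n → ℝ) : Set ℝ :=
  {v : ℝ |
      ∃ (lam : Fin (n + 2) → ℝ) (xs : Fin (n + 2) → (Fin n → ℝ)),
        (∀ i, 0 ≤ lam i) ∧ ∑ i, lam i = 1 ∧ (∀ i, xs i ∈ X) ∧
        ∑ i, lam i • xs i = x ∧ v = ∑ i, lam i * f (xs i)}

/-- **Sufficient condition for the existence of a concave tent.**
Let `X ⊆ ℝⁿ` be compact and `f` continuous on `X`.  If whenever `x ∈ X` is a convex combination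
of points of `X` the value `f x` dominates the corresponding combination of values of `f`, then
the function
`g x = sup { ∑ i, λ i * f (xs i) : λ ∈ Δ_{n+2}, xs i ∈ X, ∑ i, λ i • xs i = x }`
is concave on `convexHull ℝ X` and agrees with `f` on `X`, i.e. it is a concave tent of `f`
over `X`. -/
theorem concave_tent_exists_of_condition {n : ℕ} (X : Set (Fin n → ℝ))
    (hXcomp : IsCompact X) (f : (Fin n → ℝ) → ℝ) (hfcont : ContinuousOn f X)
    (hcond : ∀ (k : ℕ) (lam : Fin k → ℝ) (xs : Fin k → (Fin n → ℝ)),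
      (∀ i, 0 ≤ lam i) → ∑ i, lam i = 1 → (∀ i, xs i ∈ X) →
      ∀ x ∈ X, x = ∑ i, lam i • xs i → ∑ i, lam i * f (xs i) ≤ f x)
    (g : (Fin n → ℝ) → ℝ)
    (hg : g = fun x => sSup {v : ℝ |
      ∃ (lam : Fin (n + 2) → ℝ) (xs : Fin (n + 2) → (Fin n → ℝ)),
        (∀ i, 0 ≤ lam i) ∧ ∑ i, lam i = 1 ∧ (∀ i, xs i ∈ X) ∧
        ∑ i, lam i • xs i = x ∧ v = ∑ i, lam i * f (xs i)}) :
    ConcaveOn ℝ (convexHull ℝ X) g ∧ ∀ x ∈ X, g x = f x := by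
  have hg' : ∀ x, g x = sSup (tentSet n X f x) := by rw [hg]; intro x; rfl
  -- boundedness
  have hbdd : X.Nonempty → ∀ x, BddAbove (tentSet n X f x) := by
    intro hXne x
    obtain ⟨p0, hp0, hmax⟩ := hXcomp.exists_isMaxOn hXne hfcont
    refine ⟨f p0, ?_⟩
    rintro v ⟨lam, xs, h0, h1, hXs, hsum, rfl⟩
    calc ∑ i, lam i * f (xs i) ≤ ∑ i, lam i * f p0 :=
          Finset.sum_le_sum fun i _ => mul_le_mul_of_nonneg_left (hmax (hXs i)) (h0 i)
      _ = f p0 := by rw [← Finset.sum_mul, h1, one_mul]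
  -- f x belongs to the tent set when x ∈ X
  have hel : ∀ x ∈ X, f x ∈ tentSet n X f x := by
    intro x hx
    refine ⟨fun i => if i = 0 then (1 : ℝ) else 0, fun _ => x, ?_, ?_, fun _ => hx, ?_, ?_⟩
    · intro i; dsimp only; split <;> norm_num
    · simp
    · rw [show (∑ i : Fin (n + 2), (if i = 0 then (1:ℝ) else 0) • x)
          = (∑ i : Fin (n + 2), if i = 0 then (1:ℝ) else 0) • x from (Finset.sum_smul).symm]
      simp
    · rw [show (∑ i : Fin (n + 2), (if i = 0 then (1:ℝ) else 0) * f x)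
          = (∑ i : Fin (n + 2), if i = 0 then (1:ℝ) else 0) * f x from (Finset.sum_mul _ _ _).symm]
      simp
  -- nonemptiness of tent sets over the hull
  have hSne : ∀ u ∈ convexHull ℝ X, (tentSet n X f u).Nonempty := by
    intro u hu
    rw [mem_convexHull_iff_exists_fintype] at hu
    obtain ⟨ι, hι, w, zpts, hw0, hw1, hzX, hsum⟩ := hu
    obtain ⟨mu, ys, hmu0, hmu1, hysX, hsum2, hval⟩ := key_caratheodory f w zpts hw0 hw1 hzX
    exact ⟨_, mu, ys, hmu0, hmu1, hysX, by rw [hsum2, hsum], rfl⟩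
  constructor
  · refine ⟨convex_convexHull ℝ X, ?_⟩
    intro x hx y hy a b ha hb hab
    have hXne : X.Nonempty := by
      rw [← convexHull_nonempty_iff (𝕜 := ℝ)]; exact ⟨x, hx⟩
    simp only [smul_eq_mul, hg']
    rcases eq_or_lt_of_le ha with ha0 | ha0
    · have hb1 : b = 1 := by linarith
      simp only [← ha0, hb1, zero_mul, zero_add, one_mul, zero_smul, one_smul]
      exact le_rfl
    rcases eq_or_lt_of_le hb with hb0 | hb0
    · have ha1 : a = 1 := by linarith
      simp only [← hb0, ha1, zero_mul, add_zero, one_mul, zero_smul, one_smul]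
      exact le_rfl
    have hzc : a • x + b • y ∈ convexHull ℝ X := (convex_convexHull ℝ X) hx hy ha hb hab
    have hkey : ∀ u ∈ tentSet n X f x, ∀ v ∈ tentSet n X f y,
        a * u + b * v ∈ tentSet n X f (a • x + b • y) := by
      rintro u ⟨lam, xs, hl0, hl1, hlX, hlsum, rfl⟩ v ⟨mu, ys, hm0, hm1, hmX, hmsum, rfl⟩
      obtain ⟨nu, zs, hn0, hn1, hnX, hnsum, hnval⟩ := key_caratheodory f
        (Sum.elim (fun i => a * lam i) (fun i => b * mu i)) (Sum.elim xs ys)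
        (by rintro (i | i)
            · exact mul_nonneg ha (hl0 i)
            · exact mul_nonneg hb (hm0 i))
        (by rw [Fintype.sum_sum_type]
            simp only [Sum.elim_inl, Sum.elim_inr, ← Finset.mul_sum, hl1, hm1, mul_one]
            exact hab)
        (by rintro (i | i)
            · exact hlX i
            · exact hmX i)
      refine ⟨nu, zs, hn0, hn1, hnX, ?_, ?_⟩
      · rw [hnsum, Fintype.sum_sum_type]
        simp only [Sum.elim_inl, Sum.elim_inr, mul_smul]
        rw [← Finset.smul_sum, ← Finset.smul_sum, hlsum, hmsum]
      · rw [hnval, Fintype.sum_sum_type]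
        simp only [Sum.elim_inl, Sum.elim_inr, mul_assoc]
        rw [← Finset.mul_sum, ← Finset.mul_sum]
    have hgz : ∀ u ∈ tentSet n X f x, ∀ v ∈ tentSet n X f y,
        a * u + b * v ≤ sSup (tentSet n X f (a • x + b • y)) :=
      fun u hu v hv => le_csSup (hbdd hXne _) (hkey u hu v hv)
    have step1 : ∀ u ∈ tentSet n X f x,
        a * u + b * sSup (tentSet n X f y) ≤ sSup (tentSet n X f (a • x + b • y)) := by
      intro u hu
      have h2 : sSup (tentSet n X f y)
          ≤ (sSup (tentSet n X f (a • x + b • y)) - a * u) / b := by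
        apply csSup_le (hSne y hy)
        intro v hv
        rw [le_div_iff₀ hb0, mul_comm]
        have := hgz u hu v hv
        linarith
      have h3 := (le_div_iff₀ hb0).mp h2
      nlinarith
    have step2 : sSup (tentSet n X f x)
        ≤ (sSup (tentSet n X f (a • x + b • y)) - b * sSup (tentSet n X f y)) / a := by
      apply csSup_le (hSne x hx)
      intro u hu
      rw [le_div_iff₀ ha0, mul_comm]
      linarith [step1 u hu]
    have h4 := (le_div_iff₀ ha0).mp step2
    nlinarith
  · intro x hx
    rw [hg']
    refine le_antisymm (csSup_le ⟨f x, hel x hx⟩ ?_) (le_csSup (hbdd ⟨x, hx⟩ x) (hel x hx))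
    rintro v ⟨lam, xs, h0, h1, hXs, hsum, rfl⟩
    exact hcond (n + 2) lam xs h0 h1 hXs x hx hsum.symm
end

section
/- Let X ⊆ ℝⁿ be compact, f : ℝⁿ → ℝ, and let g be a concave tent of f over X. If x̄ ∈ conv(X) is a strict local minimizer of g over conv(X), i.e. there is ε > 0 such that g(x̄) < g(y) for all y ∈ (conv(X) ∩ B_ε(x̄)) \ {x̄}, then x̄ ∈ X and x̄ is a strict local minimizer of f over X, i.e. f(x̄) < f(y) for all y ∈ (X ∩ B_ε(x̄)) \ {x̄}. -/
/-- **Strict local minimizers of a concave tent are strict local minimizers of `f`.**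
Let `X ⊆ ℝⁿ` be compact and let `g` be a concave tent of `f` over `X`.  If `xb ∈ convexHull ℝ X`
is a strict local minimizer of `g` over `convexHull ℝ X` on the (closed Euclidean) ball of
radius `ε > 0`, then `xb ∈ X` and `xb` is a strict local minimizer of `f` over `X` on the same
ball. -/
theorem strict_local_min_concave_tent {n : ℕ} (X : Set (EuclideanSpace ℝ (Fin n)))
    (hXcomp : IsCompact X)
    (f g : EuclideanSpace ℝ (Fin n) → ℝ)
    (hg_concave : ConcaveOn ℝ (convexHull ℝ X) g)
    (hg_agree : ∀ x ∈ X, g x = f x)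
    (xb : EuclideanSpace ℝ (Fin n)) (hxb : xb ∈ convexHull ℝ X)
    (ε : ℝ) (hε : 0 < ε)
    (hmin : ∀ y ∈ (convexHull ℝ X ∩ Metric.closedBall xb ε) \ {xb}, g xb < g y) :
    xb ∈ X ∧ ∀ y ∈ (X ∩ Metric.closedBall xb ε) \ {xb}, f xb < f y := by
  have hxbX : xb ∈ X := by
    apply extremePoints_convexHull_subset (𝕜 := ℝ)
    rw [mem_extremePoints]
    refine ⟨hxb, fun x₁ hx₁ x₂ hx₂ hseg => ?_⟩
    obtain ⟨a, b, ha, hb, hab, habxb⟩ := hseg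
    -- degenerate cases
    have key : ∀ u v : EuclideanSpace ℝ (Fin n), ∀ c d : ℝ, 0 < c → 0 < d → c + d = 1 →
        c • u + d • v = xb → u = xb → v = xb := by
      intro u v c d hc hd hcd heq hu
      subst hu
      have : d • v = d • u := by
        have : c • u + d • v = (c + d) • u := by rw [hcd, one_smul, heq]
        rw [add_smul] at this
        linear_combination (norm := module) this
      exact smul_right_injective _ (ne_of_gt hd) this
    rcases eq_or_ne x₁ xb with h1 | h1
    · exact ⟨h1, key x₁ x₂ a b ha hb hab habxb h1⟩
    rcases eq_or_ne x₂ xb with h2 | h2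
    · refine ⟨key x₂ x₁ b a hb ha (by linarith) (by rw [add_comm]; exact habxb) h2, h2⟩
    exfalso
    -- both differ from xb: build nearby points on the segment
    have hd1 : 0 < dist x₁ xb := dist_pos.2 h1
    have hd2 : 0 < dist x₂ xb := dist_pos.2 h2
    set M := max (dist x₁ xb) (dist x₂ xb) with hM
    have hMpos : 0 < M := lt_max_of_lt_left hd1
    set t := min 1 (ε / M) with ht
    have ht0 : 0 < t := lt_min one_pos (div_pos hε hMpos)
    have ht1 : t ≤ 1 := min_le_left _ _
    have htM : t * M ≤ ε := by
      calc t * M ≤ (ε / M) * M := by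
            exact mul_le_mul_of_nonneg_right (min_le_right _ _) hMpos.le
        _ = ε := by field_simp
    set A := (1 - t) • xb + t • x₁ with hA
    set B := (1 - t) • xb + t • x₂ with hB
    have hAconv : A ∈ convexHull ℝ X :=
      (convex_convexHull ℝ X) hxb hx₁ (by linarith) ht0.le (by ring)
    have hBconv : B ∈ convexHull ℝ X :=
      (convex_convexHull ℝ X) hxb hx₂ (by linarith) ht0.le (by ring)
    have hdist : ∀ x : EuclideanSpace ℝ (Fin n), dist x xb ≤ M →
        dist ((1 - t) • xb + t • x) xb ≤ ε := by
      intro x hx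
      have : (1 - t) • xb + t • x - xb = t • (x - xb) := by module
      rw [dist_eq_norm, this, norm_smul, Real.norm_eq_abs, abs_of_pos ht0]
      calc t * ‖x - xb‖ ≤ t * M := by
            exact mul_le_mul_of_nonneg_left (by rwa [← dist_eq_norm]) ht0.le
        _ ≤ ε := htM
    have hAball : A ∈ Metric.closedBall xb ε := hdist x₁ (le_max_left _ _)
    have hBball : B ∈ Metric.closedBall xb ε := hdist x₂ (le_max_right _ _)
    have hAne : A ≠ xb := by
      intro h
      apply h1
      have : t • (x₁ - xb) = 0 := by
        have := h
        rw [hA] at this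
        linear_combination (norm := module) this
      have := smul_eq_zero.1 this
      rcases this with h' | h'
      · exact absurd h' (ne_of_gt ht0)
      · exact sub_eq_zero.1 h'
    have hBne : B ≠ xb := by
      intro h
      apply h2
      have : t • (x₂ - xb) = 0 := by
        have := h
        rw [hB] at this
        linear_combination (norm := module) this
      have := smul_eq_zero.1 this
      rcases this with h' | h'
      · exact absurd h' (ne_of_gt ht0)
      · exact sub_eq_zero.1 h'
    have hgA : g xb < g A := hmin A ⟨⟨hAconv, hAball⟩, hAne⟩
    have hgB : g xb < g B := hmin B ⟨⟨hBconv, hBball⟩, hBne⟩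
    have hcomb : a • A + b • B = xb := by
      rw [hA, hB]
      linear_combination (norm := module) (t : ℝ) • habxb + (1 - t) • (add_smul a b xb).symm
        + (1 - t) • (hab ▸ (one_smul ℝ xb) : (a + b) • xb = xb)
    have := hg_concave.2 hAconv hBconv ha.le hb.le hab
    rw [hcomb] at this
    simp only [smul_eq_mul] at this
    have hsum : (a + b) * g xb = g xb := by rw [hab, one_mul]
    nlinarith [mul_lt_mul_of_pos_left hgA ha, mul_lt_mul_of_pos_left hgB hb, hsum]
  refine ⟨hxbX, fun y hy => ?_⟩
  obtain ⟨⟨hyX, hyb⟩, hyne⟩ := hy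
  have := hmin y ⟨⟨subset_convexHull ℝ X hyX, hyb⟩, hyne⟩
  rwa [hg_agree xb hxbX, hg_agree y hyX] at this
end

section
/- Let X ⊆ ℝⁿ be compact and nonempty, f : ℝⁿ → ℝ, and let g be a concave tent of f over X. Then inf_{x∈X} f(x) = inf_{x∈conv(X)} g(x). Moreover, every global minimizer of f over X is a global minimizer of g over conv(X), and every global minimizer of g over conv(X) that belongs to X is a global minimizer of f over X. -/
/-- **Optimizing a concave tent over the convex hull solves the original problem.**
Let `X ⊆ ℝⁿ` be compact and nonempty and let `g` be a concave tent of `f` over `X`. Then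
`inf_{x ∈ X} f x = inf_{x ∈ convexHull ℝ X} g x`; every global minimizer of `f` over `X` is a
global minimizer of `g` over `convexHull ℝ X`; and every global minimizer of `g` over
`convexHull ℝ X` that belongs to `X` is a global minimizer of `f` over `X`. -/
theorem concave_tent_same_infimum {n : ℕ} (X : Set (Fin n → ℝ))
    (hXcomp : IsCompact X) (hXne : X.Nonempty)
    (f g : (Fin n → ℝ) → ℝ)
    (hg_concave : ConcaveOn ℝ (convexHull ℝ X) g)
    (hg_agree : ∀ x ∈ X, g x = f x) :
    sInf (f '' X) = sInf (g '' (convexHull ℝ X)) ∧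
    (∀ x ∈ X, (∀ y ∈ X, f x ≤ f y) →
      x ∈ convexHull ℝ X ∧ ∀ y ∈ convexHull ℝ X, g x ≤ g y) ∧
    (∀ x ∈ convexHull ℝ X, x ∈ X → (∀ y ∈ convexHull ℝ X, g x ≤ g y) →
      ∀ y ∈ X, f x ≤ f y) := by
  have hsub : X ⊆ convexHull ℝ X := subset_convexHull ℝ X
  -- every value of g on the hull is ≥ some value of f on X
  have key : ∀ y ∈ convexHull ℝ X, ∃ z ∈ X, f z ≤ g y := by
    intro y hy
    obtain ⟨z, hz, hzy⟩ := hg_concave.exists_le_of_mem_convexHull hsub hy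
    exact ⟨z, hz, (hg_agree z hz) ▸ hzy⟩
  have himg : f '' X ⊆ g '' (convexHull ℝ X) := by
    rintro _ ⟨x, hx, rfl⟩
    exact ⟨x, hsub hx, hg_agree x hx⟩
  refine ⟨?_, ?_, ?_⟩
  · by_cases hbdd : BddBelow (f '' X)
    · obtain ⟨b, hb⟩ := hbdd
      have hbdd' : BddBelow (g '' (convexHull ℝ X)) := by
        refine ⟨b, ?_⟩
        rintro _ ⟨y, hy, rfl⟩
        obtain ⟨z, hz, hzy⟩ := key y hy
        exact le_trans (hb ⟨z, hz, rfl⟩) hzy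
      refine le_antisymm ?_ ?_
      · apply le_csInf ((hXne.image f).mono himg)
        rintro _ ⟨y, hy, rfl⟩
        obtain ⟨z, hz, hzy⟩ := key y hy
        exact le_trans (csInf_le ⟨b, fun p hp => hb hp⟩ ⟨z, hz, rfl⟩) hzy
      · exact csInf_le_csInf hbdd' (hXne.image f) himg
    · have hbdd' : ¬ BddBelow (g '' (convexHull ℝ X)) := fun h => hbdd (h.mono himg)
      rw [Real.sInf_of_not_bddBelow hbdd, Real.sInf_of_not_bddBelow hbdd']
  · intro x hx hmin
    refine ⟨hsub hx, fun y hy => ?_⟩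
    obtain ⟨z, hz, hzy⟩ := key y hy
    calc g x = f x := hg_agree x hx
    _ ≤ f z := hmin z hz
    _ ≤ g y := hzy
  · intro x _ hxX hmin y hy
    calc f x = g x := (hg_agree x hxX).symm
    _ ≤ g y := hmin y (hsub hy)
    _ = f y := hg_agree y hy
end

section
/- Let U ⊆ ℝ^q be a nonempty convex compact set contained in the closed Euclidean unit ball, let B be a q×n real matrix and c ∈ ℝ^q, and define f : ℝⁿ → ℝ by f(x) := sup_{u∈U} ( uᵀBx + cᵀu ). Let X ⊆ {0,1}ⁿ, and let 𝒞 be a closed convex set of symmetric (1+q+n)×(1+q+n) matrices with 𝒢(U×X) ⊆ 𝒞 ⊆ { positive semidefinite matrices }. Define g(x) := sup { tr(BΨ) + cᵀu : u ∈ ℝ^q, Ub a symmetric q×q matrix, Ψ ∈ ℝ^{n×q}, Xb a symmetric n×n matrix, such that the block matrix [[1, uᵀ, xᵀ],[u, Ub, Ψᵀ],[x, Ψ, Xb]] ∈ 𝒞, u ∈ U, diag(Xb) = x, and tr(Ub) ≤ 1 }. Then g is a concave tent of f over X: g is concave on conv(X) and g(x) = f(x) for all x ∈ X. -/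
noncomputable section

open Matrix

/-- Prepend a leading coordinate `1` to the vector `s`. -/
def lift1 {d : Type*} (s : d → ℝ) : (Unit ⊕ d) → ℝ := Sum.elim (fun _ => (1 : ℝ)) s

/-- `𝒢(S)`: the closed convex hull of the rank-one matrices `(1,s)(1,s)ᵀ`, `s ∈ S`. -/
def GSet {d : Type*} (S : Set (d → ℝ)) : Set (Matrix (Unit ⊕ d) (Unit ⊕ d) ℝ) :=
  closure (convexHull ℝ {M | ∃ s ∈ S, M = vecMulVec (lift1 s) (lift1 s)})

/-- The bordered matrix `[[1, xᵀ], [x, Xb]]`. -/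
def corner {d : Type*} (x : d → ℝ) (Xb : Matrix d d ℝ) :
    Matrix (Unit ⊕ d) (Unit ⊕ d) ℝ :=
  Matrix.fromBlocks (Matrix.of fun _ _ => (1 : ℝ)) (Matrix.of fun _ j => x j)
    (Matrix.of fun i _ => x i) Xb

/-- The block matrix `[[1, uᵀ, xᵀ], [u, Ub, Ψᵀ], [x, Ψ, Xb]]`. -/
def blk {q n : ℕ} (u : Fin q → ℝ) (x : Fin n → ℝ) (Ub : Matrix (Fin q) (Fin q) ℝ)
    (Ψ : Matrix (Fin n) (Fin q) ℝ) (Xb : Matrix (Fin n) (Fin n) ℝ) :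
    Matrix (Unit ⊕ (Fin q ⊕ Fin n)) (Unit ⊕ (Fin q ⊕ Fin n)) ℝ :=
  corner (Sum.elim u x) (Matrix.fromBlocks Ub Ψᵀ Ψ Xb)

/-- Discriminant lemma: a quadratic that is nonnegative everywhere has nonpositive
discriminant. -/
lemma disc_aux {a b c : ℝ} (h : ∀ t : ℝ, 0 ≤ t^2 * b + 2*t*a + c) : a^2 ≤ b * c := by
  have hb : 0 ≤ b := by
    by_contra hb
    push_neg at hb
    set T := max 1 ((2*|a|+|c|+1)/(-b)) with hT
    have h1 : (1:ℝ) ≤ T := le_max_left _ _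
    have h2 : (2*|a|+|c|+1)/(-b) ≤ T := le_max_right _ _
    have h3 : 2*|a|+|c|+1 ≤ T * (-b) := by
      rw [div_le_iff₀ (by linarith : (0:ℝ) < -b)] at h2; linarith
    have h4 := h T
    nlinarith [le_abs_self a, neg_abs_le a, le_abs_self c, neg_abs_le c]
  rcases eq_or_lt_of_le hb with hb0 | hb0
  · have ha : a = 0 := by
      by_contra ha
      have h' := h (-(c+1)/(2*a))
      rw [← hb0] at h'
      have key : 2 * (-(c+1)/(2*a)) * a = -(c+1) := by field_simp
      rw [key] at h'
      simp at h'
      linarith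
    rw [ha, ← hb0]
    simp
  · have h' := h (-a/b)
    have hb' : b ≠ 0 := ne_of_gt hb0
    have e1 : (-a/b)^2 * b = a^2/b := by field_simp
    have e2 : 2*(-a/b)*a = -(2*(a^2/b)) := by ring
    rw [e1, e2] at h'
    have h2 : a^2/b ≤ c := by linarith
    calc a^2 = (a^2/b)*b := by field_simp
      _ ≤ c*b := mul_le_mul_of_nonneg_right h2 hb
      _ = b*c := mul_comm _ _

/-- Evaluation of the quadratic form of `blk` at a vector supported on the leading
coordinate, one `u`-coordinate and one `x`-coordinate. -/
lemma blk_quad {q n : ℕ} (u : Fin q → ℝ) (x : Fin n → ℝ) (Ub : Matrix (Fin q) (Fin q) ℝ)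
    (Ψ : Matrix (Fin n) (Fin q) ℝ) (Xb : Matrix (Fin n) (Fin n) ℝ)
    (i : Fin n) (j : Fin q) (a b c : ℝ) :
    (Sum.elim (fun _ => a) (Sum.elim (Pi.single j c) (Pi.single i b))) ⬝ᵥ
      (blk u x Ub Ψ Xb) *ᵥ (Sum.elim (fun _ => a) (Sum.elim (Pi.single j c) (Pi.single i b)))
    = a^2 + c^2 * Ub j j + b^2 * Xb i i + 2*(a*c)*u j + 2*(a*b)*x i + 2*(b*c)*Ψ i j := by
  simp [blk, corner, Matrix.mulVec, dotProduct, Fintype.sum_sum_type, Matrix.fromBlocks,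
    Pi.single_apply, mul_ite, ite_mul, Finset.sum_ite_eq', Finset.mem_univ, mul_comm, mul_assoc,
    mul_add, add_mul, Finset.sum_add_distrib]
  ring

/-- If `blk u x Ub Ψ Xb` is PSD, the diagonal of `Xb` is `x` and `x` is a `0/1` vector,
then `Ψ = x uᵀ`. -/
lemma psi_eq {q n : ℕ} {u : Fin q → ℝ} {x : Fin n → ℝ} {Ub : Matrix (Fin q) (Fin q) ℝ}
    {Ψ : Matrix (Fin n) (Fin q) ℝ} {Xb : Matrix (Fin n) (Fin n) ℝ}
    (hM : (blk u x Ub Ψ Xb).PosSemidef)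
    (hdiag : ∀ i, Xb i i = x i) (hx : ∀ i, x i = 0 ∨ x i = 1) (i : Fin n) (j : Fin q) :
    Ψ i j = x i * u j := by
  have hq : ∀ a b c : ℝ, 0 ≤ a^2 + c^2 * Ub j j + b^2 * Xb i i + 2*(a*c)*u j + 2*(a*b)*x i
      + 2*(b*c)*Ψ i j := by
    intro a b c
    have := hM.dotProduct_mulVec_nonneg (Sum.elim (fun _ => a) (Sum.elim (Pi.single j c) (Pi.single i b)))
    rw [show star (Sum.elim (fun _ => a) (Sum.elim (Pi.single j c) (Pi.single i b)))
        = (Sum.elim (fun _ => a) (Sum.elim (Pi.single j c) (Pi.single i b))) from rfl] at this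
    rw [blk_quad] at this
    exact this
  rcases hx i with h0 | h1
  · have key : (Ψ i j)^2 ≤ Xb i i * Ub j j := by
      apply disc_aux
      intro t
      have := hq 0 t 1
      rw [hdiag i, h0] at this ⊢
      nlinarith [this]
    rw [hdiag i, h0] at key
    have : Ψ i j = 0 := by nlinarith [sq_nonneg (Ψ i j)]
    rw [this, h0]; ring
  · have key : (u j - Ψ i j)^2 ≤ Ub j j * 0 := by
      apply disc_aux
      intro t
      have := hq 1 (-1) t
      rw [hdiag i, h1] at this
      nlinarith [this]
    have : Ψ i j = u j := by nlinarith [sq_nonneg (u j - Ψ i j)]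
    rw [this, h1]; ring

lemma trace_mul_vecMulVec {q n : ℕ} (B : Matrix (Fin q) (Fin n) ℝ) (x : Fin n → ℝ)
    (u : Fin q → ℝ) : Matrix.trace (B * vecMulVec x u) = u ⬝ᵥ B.mulVec x := by
  simp [Matrix.trace, Matrix.diag, Matrix.mul_apply, vecMulVec_apply, dotProduct,
    Matrix.mulVec, Finset.mul_sum]
  apply Finset.sum_congr rfl
  intro j _
  apply Finset.sum_congr rfl
  intro i _
  ring

lemma blk_rankone {q n : ℕ} (u : Fin q → ℝ) (x : Fin n → ℝ) :
    blk u x (vecMulVec u u) (vecMulVec x u) (vecMulVec x x)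
      = vecMulVec (lift1 (Sum.elim u x)) (lift1 (Sum.elim u x)) := by
  ext k l
  rcases k with _ | (j | i) <;> rcases l with _ | (j' | i') <;>
    simp [blk, corner, vecMulVec_apply, lift1, Matrix.fromBlocks] <;> ring

lemma blk_combo {q n : ℕ} (s t : ℝ) (hst : s + t = 1)
    (u₁ u₂ : Fin q → ℝ) (x₁ x₂ : Fin n → ℝ) (Ub₁ Ub₂ : Matrix (Fin q) (Fin q) ℝ)
    (Ψ₁ Ψ₂ : Matrix (Fin n) (Fin q) ℝ) (Xb₁ Xb₂ : Matrix (Fin n) (Fin n) ℝ) :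
    s • blk u₁ x₁ Ub₁ Ψ₁ Xb₁ + t • blk u₂ x₂ Ub₂ Ψ₂ Xb₂
      = blk (s • u₁ + t • u₂) (s • x₁ + t • x₂) (s • Ub₁ + t • Ub₂)
          (s • Ψ₁ + t • Ψ₂) (s • Xb₁ + t • Xb₂) := by
  ext k l
  rcases k with _ | (j | i) <;> rcases l with _ | (j' | i') <;>
    simp [blk, corner, Matrix.fromBlocks, Matrix.smul_apply, Matrix.add_apply, hst]

lemma ereal_lt_mul_sSup {s : ℝ} (hs : 0 < s) {A : Set EReal} {d : EReal}
    (hd : d < (s : EReal) * sSup A) : ∃ v ∈ A, d < (s : EReal) * v := by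
  have hs' : (0 : EReal) < (s : EReal) := by exact_mod_cast hs
  have hsne : (s : EReal) ≠ ⊤ := EReal.coe_ne_top s
  have h1 : d / (s : EReal) < sSup A := by
    by_contra h
    push_neg at h
    have := (EReal.le_div_iff_mul_le hs' hsne).mp h
    rw [mul_comm] at this
    exact absurd hd (not_lt.mpr this)
  obtain ⟨v, hv, hlt⟩ := lt_sSup_iff.mp h1
  refine ⟨v, hv, ?_⟩
  by_contra h
  push_neg at h
  have : v ≤ d / (s : EReal) := (EReal.le_div_iff_mul_le hs' hsne).mpr (by rwa [mul_comm] at h)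
  exact absurd hlt (not_lt.mpr this)

/-- **Concave tents of convex functions over subsets of `{0,1}ⁿ` (Theorem 5).**
Let `U ⊆ ℝ^q` be nonempty, convex, compact and contained in the closed Euclidean unit ball,
`f x = sup_{u ∈ U} (uᵀ B x + cᵀ u)`, and `X ⊆ {0,1}ⁿ`.  Let `𝒞` be a closed convex set of
symmetric matrices with `𝒢(U × X) ⊆ 𝒞 ⊆ PSD`.  Then the optimal value function
`g x = sup { tr(BΨ) + cᵀu : blk(u,x,Ub,Ψ,Xb) ∈ 𝒞, u ∈ U, diag Xb = x, tr Ub ≤ 1 }`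
is a concave tent of `f` over `X`: it is concave on `convexHull ℝ X` (in the extended-real
sense) and agrees with `f` on `X`. -/
theorem concave_tent_over_boolean {n q : ℕ}
    (U : Set (Fin q → ℝ)) (hUne : U.Nonempty) (hUconv : Convex ℝ U)
    (hUcomp : IsCompact U) (hUball : ∀ u ∈ U, u ⬝ᵥ u ≤ 1)
    (B : Matrix (Fin q) (Fin n) ℝ) (c : Fin q → ℝ)
    (f : (Fin n → ℝ) → ℝ)
    (hf : f = fun x => sSup ((fun u => u ⬝ᵥ B.mulVec x + c ⬝ᵥ u) '' U))
    (X : Set (Fin n → ℝ)) (hX01 : ∀ x ∈ X, ∀ i, x i = 0 ∨ x i = 1)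
    (𝒞 : Set (Matrix (Unit ⊕ (Fin q ⊕ Fin n)) (Unit ⊕ (Fin q ⊕ Fin n)) ℝ))
    (h𝒞closed : IsClosed 𝒞) (h𝒞convex : Convex ℝ 𝒞)
    (h𝒞low : GSet {w : Fin q ⊕ Fin n → ℝ | ∃ u ∈ U, ∃ x ∈ X, w = Sum.elim u x} ⊆ 𝒞)
    (h𝒞psd : ∀ M ∈ 𝒞, M.PosSemidef)
    (g : (Fin n → ℝ) → EReal)
    (hg : g = fun x => sSup {v : EReal |
      ∃ (u : Fin q → ℝ) (Ub : Matrix (Fin q) (Fin q) ℝ) (Ψ : Matrix (Fin n) (Fin q) ℝ)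
        (Xb : Matrix (Fin n) (Fin n) ℝ),
        Ub.IsSymm ∧ Xb.IsSymm ∧ blk u x Ub Ψ Xb ∈ 𝒞 ∧ u ∈ U ∧
        (∀ i, Xb i i = x i) ∧ Matrix.trace Ub ≤ 1 ∧
        v = ((Matrix.trace (B * Ψ) + c ⬝ᵥ u : ℝ) : EReal)}) :
    (∀ x₁ ∈ convexHull ℝ X, ∀ x₂ ∈ convexHull ℝ X, ∀ s t : ℝ,
      0 ≤ s → 0 ≤ t → s + t = 1 →
      (s : EReal) * g x₁ + (t : EReal) * g x₂ ≤ g (s • x₁ + t • x₂)) ∧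
    (∀ x ∈ X, g x = ((f x : ℝ) : EReal)) := by
  subst hf hg
  constructor
  · -- concavity
    intro x₁ _ x₂ _ s t hs ht hst
    rcases eq_or_lt_of_le hs with hs0 | hs0
    · have ht1 : t = 1 := by linarith
      subst ht1
      rw [← hs0]
      simp
    rcases eq_or_lt_of_le ht with ht0 | ht0
    · have hs1 : s = 1 := by linarith
      subst hs1
      rw [← ht0]
      simp
    apply EReal.add_le_of_forall_lt
    intro a' ha' b' hb'
    obtain ⟨va, hva, hda⟩ := ereal_lt_mul_sSup hs0 ha'
    obtain ⟨vb, hvb, hdb⟩ := ereal_lt_mul_sSup ht0 hb'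
    obtain ⟨u₁, Ub₁, Ψ₁, Xb₁, hUbs₁, hXbs₁, hC₁, hu₁, hdiag₁, htr₁, rfl⟩ := hva
    obtain ⟨u₂, Ub₂, Ψ₂, Xb₂, hUbs₂, hXbs₂, hC₂, hu₂, hdiag₂, htr₂, rfl⟩ := hvb
    have hmem : ((s * (Matrix.trace (B * Ψ₁) + c ⬝ᵥ u₁)
        + t * (Matrix.trace (B * Ψ₂) + c ⬝ᵥ u₂) : ℝ) : EReal) ∈
        {v : EReal | ∃ (u : Fin q → ℝ) (Ub : Matrix (Fin q) (Fin q) ℝ)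
          (Ψ : Matrix (Fin n) (Fin q) ℝ) (Xb : Matrix (Fin n) (Fin n) ℝ),
          Ub.IsSymm ∧ Xb.IsSymm ∧ blk u (s • x₁ + t • x₂) Ub Ψ Xb ∈ 𝒞 ∧ u ∈ U ∧
          (∀ i, Xb i i = (s • x₁ + t • x₂) i) ∧ Matrix.trace Ub ≤ 1 ∧
          v = ((Matrix.trace (B * Ψ) + c ⬝ᵥ u : ℝ) : EReal)} := by
      refine ⟨s • u₁ + t • u₂, s • Ub₁ + t • Ub₂, s • Ψ₁ + t • Ψ₂, s • Xb₁ + t • Xb₂,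
        ?_, ?_, ?_, ?_, ?_, ?_, ?_⟩
      · show (s • Ub₁ + t • Ub₂)ᵀ = _
        rw [Matrix.transpose_add, Matrix.transpose_smul, Matrix.transpose_smul, hUbs₁, hUbs₂]
      · show (s • Xb₁ + t • Xb₂)ᵀ = _
        rw [Matrix.transpose_add, Matrix.transpose_smul, Matrix.transpose_smul, hXbs₁, hXbs₂]
      · rw [← blk_combo s t hst]
        exact h𝒞convex hC₁ hC₂ hs ht hst
      · exact hUconv hu₁ hu₂ hs ht hst
      · intro i
        simp [hdiag₁ i, hdiag₂ i]
      · rw [Matrix.trace_add, Matrix.trace_smul, Matrix.trace_smul]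
        have h1 : s • Matrix.trace Ub₁ ≤ s • (1:ℝ) := smul_le_smul_of_nonneg_left htr₁ hs
        have h2 : t • Matrix.trace Ub₂ ≤ t • (1:ℝ) := smul_le_smul_of_nonneg_left htr₂ ht
        simp only [smul_eq_mul, mul_one] at h1 h2 ⊢
        linarith
      · congr 1
        rw [Matrix.mul_add, Matrix.mul_smul, Matrix.mul_smul, Matrix.trace_add,
          Matrix.trace_smul, Matrix.trace_smul, dotProduct_add, dotProduct_smul,
          dotProduct_smul]
        simp only [smul_eq_mul]
        ring
    calc a' + b' ≤ (s : EReal) * ((Matrix.trace (B * Ψ₁) + c ⬝ᵥ u₁ : ℝ) : EReal)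
          + (t : EReal) * ((Matrix.trace (B * Ψ₂) + c ⬝ᵥ u₂ : ℝ) : EReal) :=
        add_le_add hda.le hdb.le
      _ = ((s * (Matrix.trace (B * Ψ₁) + c ⬝ᵥ u₁)
          + t * (Matrix.trace (B * Ψ₂) + c ⬝ᵥ u₂) : ℝ) : EReal) := by
        rw [← EReal.coe_mul, ← EReal.coe_mul, ← EReal.coe_add]
      _ ≤ _ := le_sSup hmem
  · -- tent property
    intro x hx
    have hcont : Continuous fun u : Fin q → ℝ => u ⬝ᵥ B.mulVec x + c ⬝ᵥ u := by
      apply Continuous.add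
      · exact (continuous_finset_sum _ fun i _ =>
          (continuous_apply i).mul continuous_const)
      · exact (continuous_finset_sum _ fun i _ =>
          continuous_const.mul (continuous_apply i))
    have himg : IsCompact ((fun u : Fin q → ℝ => u ⬝ᵥ B.mulVec x + c ⬝ᵥ u) '' U) :=
      hUcomp.image hcont
    have hne : ((fun u : Fin q → ℝ => u ⬝ᵥ B.mulVec x + c ⬝ᵥ u) '' U).Nonempty :=
      hUne.image _
    obtain ⟨u₀, hu₀, hval⟩ := himg.sSup_mem hne
    apply le_antisymm
    · apply sSup_le
      rintro v ⟨u, Ub, Ψ, Xb, _, _, hC, hu, hdiag, htr, rfl⟩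
      have hpsd := h𝒞psd _ hC
      have hΨ : Ψ = vecMulVec x u := by
        ext i j
        rw [vecMulVec_apply]
        exact psi_eq hpsd hdiag (hX01 x hx) i j
      rw [hΨ, trace_mul_vecMulVec]
      have hle : u ⬝ᵥ B.mulVec x + c ⬝ᵥ u
          ≤ sSup ((fun u : Fin q → ℝ => u ⬝ᵥ B.mulVec x + c ⬝ᵥ u) '' U) :=
        le_csSup himg.bddAbove ⟨u, hu, rfl⟩
      exact_mod_cast hle
    · apply le_sSup
      refine ⟨u₀, vecMulVec u₀ u₀, vecMulVec x u₀, vecMulVec x x, ?_, ?_, ?_, hu₀, ?_, ?_, ?_⟩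
      · show (vecMulVec u₀ u₀)ᵀ = _
        ext i j
        simp [vecMulVec_apply, mul_comm]
      · show (vecMulVec x x)ᵀ = _
        ext i j
        simp [vecMulVec_apply, mul_comm]
      · rw [blk_rankone]
        apply h𝒞low
        apply subset_closure
        apply subset_convexHull
        exact ⟨Sum.elim u₀ x, ⟨u₀, hu₀, x, hx, rfl⟩, rfl⟩
      · intro i
        rw [vecMulVec_apply]
        rcases hX01 x hx i with h | h <;> rw [h] <;> ring
      · have : Matrix.trace (vecMulVec u₀ u₀) = u₀ ⬝ᵥ u₀ := by
          simp [Matrix.trace, Matrix.diag, vecMulVec_apply, dotProduct]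
        rw [this]
        exact hUball u₀ hu₀
      · rw [trace_mul_vecMulVec]
        norm_cast
        simpa using hval.symm
end
end

section
/- Let A₁,…,A_m be symmetric n×n real matrices and a₁,…,a_m ∈ ℝⁿ, and define the linear map 𝒜 : Sym(n)×ℝⁿ → ℝᵐ by 𝒜(Xb,x)ᵢ = tr(AᵢXb) + aᵢᵀx. Then the following are equivalent: (i) the only positive semidefinite matrix Xb with 𝒜(Xb,0) = 0 is Xb = 0; (ii) there exists λ ∈ ℝᵐ such that Σᵢ₌₁ᵐ λᵢAᵢ is positive definite. -/
noncomputable section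

open Matrix

attribute [local instance] Matrix.normedAddCommGroup Matrix.normedSpace

namespace PsdKernelAux

variable {n m : ℕ}

lemma trace_zero_of_posDef {P X : Matrix (Fin n) (Fin n) ℝ}
    (hP : P.PosDef) (hX : X.PosSemidef) (h : Matrix.trace (P * X) = 0) : X = 0 := by
  obtain ⟨B, rfl⟩ : ∃ B : Matrix (Fin n) (Fin n) ℝ, X = Bᴴ * B := by
    open scoped MatrixOrder in
    obtain ⟨B, hB⟩ := CStarAlgebra.nonneg_iff_eq_star_mul_self.mp hX.nonneg
    exact ⟨B, hB⟩
  have hq : ∀ k : Fin n, (0:ℝ) ≤ star (B k) ⬝ᵥ P *ᵥ (B k) := fun k => hP.posSemidef.dotProduct_mulVec_nonneg (B k)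
  have hsum : Matrix.trace (P * (Bᴴ * B)) = ∑ k, star (B k) ⬝ᵥ P *ᵥ (B k) := by
    rw [← Matrix.mul_assoc, Matrix.trace_mul_cycle]
    simp only [Matrix.trace, Matrix.diag, Matrix.mul_apply, dotProduct, mulVec,
      conjTranspose_apply, star_trivial, Finset.mul_sum, Finset.sum_mul, Pi.star_apply]
    refine Finset.sum_congr rfl fun k _ => ?_
    rw [Finset.sum_comm]
    exact Finset.sum_congr rfl fun i _ => Finset.sum_congr rfl fun j _ => by ring
  have hB : B = 0 := by
    have hz : ∀ k, star (B k) ⬝ᵥ P *ᵥ (B k) = 0 := fun k =>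
      (Finset.sum_eq_zero_iff_of_nonneg (fun k _ => hq k)).mp (hsum ▸ h) k (Finset.mem_univ k)
    funext k j
    by_contra hk
    have hBk : B k ≠ 0 := fun hh => hk (by simp [hh])
    exact absurd (hz k) (ne_of_gt (hP.dotProduct_mulVec_pos hBk))
  simp [hB]

lemma psd_iff (X : Matrix (Fin n) (Fin n) ℝ) :
    X.PosSemidef ↔ (∀ i j, X j i = X i j) ∧ ∀ v : Fin n → ℝ, 0 ≤ v ⬝ᵥ X *ᵥ v := by
  constructor
  · intro hX
    refine ⟨fun i j => ?_, fun v => by simpa using hX.dotProduct_mulVec_nonneg v⟩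
    have := congrFun (congrFun hX.1 i) j
    simpa using this
  · intro ⟨h1, h2⟩
    exact PosSemidef.of_dotProduct_mulVec_nonneg (Matrix.ext fun i j => by simpa using h1 i j) fun v => by simpa using h2 v

lemma isClosed_psd : IsClosed {X : Matrix (Fin n) (Fin n) ℝ | X.PosSemidef} := by
  have : {X : Matrix (Fin n) (Fin n) ℝ | X.PosSemidef} =
      (⋂ i, ⋂ j, {X : Matrix (Fin n) (Fin n) ℝ | X j i = X i j}) ∩
        ⋂ v : Fin n → ℝ, {X | 0 ≤ v ⬝ᵥ X *ᵥ v} := by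
    ext X
    simp only [Set.mem_setOf_eq, Set.mem_inter_iff, Set.mem_iInter, psd_iff]
  rw [this]
  refine IsClosed.inter (isClosed_iInter fun i => isClosed_iInter fun j => ?_)
    (isClosed_iInter fun v => ?_)
  · exact isClosed_eq (continuous_id.matrix_elem j i) (continuous_id.matrix_elem i j)
  · exact isClosed_le continuous_const
      (continuous_const.dotProduct (continuous_id.matrix_mulVec continuous_const))

lemma entry_le_one {X : Matrix (Fin n) (Fin n) ℝ} (hX : X.PosSemidef) (ht : X.trace = 1)
    (i j : Fin n) : |X i j| ≤ 1 := by
  obtain ⟨hsymm, hq⟩ := (psd_iff X).mp hX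
  have hdiag : ∀ k, 0 ≤ X k k := by
    intro k
    have := hq (Pi.single k 1)
    simpa [mulVec_single, single_dotProduct] using this
  have hdle : ∀ k, X k k ≤ 1 := by
    intro k
    calc X k k ≤ ∑ l, X l l := Finset.single_le_sum (fun l _ => hdiag l) (Finset.mem_univ k)
    _ = 1 := ht
  have hqc : ∀ c : ℝ, 0 ≤ X i i + 2 * c * X i j + c ^ 2 * X j j ∨ i = j := by
    intro c
    by_cases hij : i = j
    · exact Or.inr hij
    refine Or.inl ?_
    have := hq (Pi.single i 1 + Pi.single j c)
    have hm : X *ᵥ (Pi.single i 1 + Pi.single j c) =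
        (fun k => X k i * 1) + (fun k => X k j * c) := by
      rw [Matrix.mulVec_add, mulVec_single, mulVec_single]
      ext k; simp [mul_comm]
    rw [hm] at this
    simp only [add_dotProduct, dotProduct_add, single_dotProduct, Pi.add_apply] at this
    have hji : X j i = X i j := hsymm i j
    rw [hji] at this
    ring_nf at this ⊢
    linarith
  by_cases hij : i = j
  · subst hij
    rw [abs_le]; exact ⟨by linarith [hdiag i], hdle i⟩
  · have h1 := (hqc 1).resolve_right hij
    have h2 := (hqc (-1)).resolve_right hij
    have := hdle i; have := hdle j; have := hdiag i; have := hdiag j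
    rw [abs_le]; constructor <;> nlinarith

lemma isCompact_K : IsCompact {X : Matrix (Fin n) (Fin n) ℝ | X.PosSemidef ∧ X.trace = 1} := by
  apply Metric.isCompact_of_isClosed_isBounded
  · exact isClosed_psd.inter (isClosed_eq continuous_id.matrix_trace continuous_const)
  · rw [isBounded_iff_forall_norm_le]
    refine ⟨1, fun X hX => ?_⟩
    rw [Matrix.norm_le_iff zero_le_one]
    intro i j
    simpa [Real.norm_eq_abs] using entry_le_one hX.1 hX.2 i j

lemma convex_K : Convex ℝ {X : Matrix (Fin n) (Fin n) ℝ | X.PosSemidef ∧ X.trace = 1} := by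
  intro X hX Y hY a b ha hb hab
  obtain ⟨hX1, hX2⟩ := (psd_iff X).mp hX.1
  obtain ⟨hY1, hY2⟩ := (psd_iff Y).mp hY.1
  refine ⟨(psd_iff _).mpr ⟨fun i j => ?_, fun v => ?_⟩, ?_⟩
  · simp only [Matrix.add_apply, Matrix.smul_apply, smul_eq_mul]
    rw [hX1 i j, hY1 i j]
  · have : v ⬝ᵥ (a • X + b • Y) *ᵥ v = a * (v ⬝ᵥ X *ᵥ v) + b * (v ⬝ᵥ Y *ᵥ v) := by
      rw [Matrix.add_mulVec, Matrix.smul_mulVec, Matrix.smul_mulVec,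
        dotProduct_add, dotProduct_smul, dotProduct_smul]
      simp [smul_eq_mul]
    rw [this]
    have := hX2 v; have := hY2 v
    positivity
  · simp only [Set.mem_setOf_eq, Matrix.trace_add, Matrix.trace_smul, hX.2, hY.2,
      smul_eq_mul, mul_one]
    exact hab

end PsdKernelAux

open PsdKernelAux

/-- **Lemma 4 (characterization of condition (N2)).**
For the linear map `𝒜(Xb, x)ᵢ = tr(Aᵢ Xb) + aᵢᵀx` built from symmetric matrices `Aᵢ` and
vectors `aᵢ`, the only positive semidefinite `Xb` with `𝒜(Xb, 0) = 0` is `Xb = 0` if and only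
if some linear combination `∑ i, λ i • A i` is positive definite. -/
theorem psd_kernel_trivial_iff_posdef_combination {n m : ℕ}
    (A : Fin m → Matrix (Fin n) (Fin n) ℝ) (hA : ∀ i, (A i).IsSymm)
    (a : Fin m → (Fin n → ℝ))
    (calA : Matrix (Fin n) (Fin n) ℝ × (Fin n → ℝ) → (Fin m → ℝ))
    (hcalA : calA = fun p i => Matrix.trace (A i * p.1) + a i ⬝ᵥ p.2) :
    (∀ Xb : Matrix (Fin n) (Fin n) ℝ, Xb.PosSemidef → calA (Xb, 0) = 0 → Xb = 0) ↔
      ∃ lam : Fin m → ℝ, (∑ i, lam i • A i).PosDef := by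
  subst hcalA
  constructor
  · intro h
    by_cases hn : n = 0
    · subst hn
      refine ⟨0, by simp, fun x hx => absurd (Subsingleton.elim x 0) hx⟩
    -- hard direction
    set K := {X : Matrix (Fin n) (Fin n) ℝ | X.PosSemidef ∧ X.trace = 1} with hK
    set φ : Matrix (Fin n) (Fin n) ℝ → (Fin m → ℝ) := fun X i => Matrix.trace (A i * X) with hφ
    have hφlin : IsLinearMap ℝ φ :=
      ⟨fun X Y => funext fun i => by simp [hφ, Matrix.mul_add],
       fun c X => funext fun i => by simp [hφ, Matrix.mul_smul]⟩
    have hφcont : Continuous φ :=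
      continuous_pi fun i => (continuous_const.matrix_mul continuous_id).matrix_trace
    have hScompact : IsCompact (φ '' K) := isCompact_K.image hφcont
    have hSconv : Convex ℝ (φ '' K) := Convex.is_linear_image convex_K hφlin
    have h0S : (0 : Fin m → ℝ) ∉ φ '' K := by
      rintro ⟨X, ⟨hXpsd, hXtr⟩, hX0⟩
      have : X = 0 := by
        apply h X hXpsd
        funext i
        have := congrFun hX0 i
        simpa [hφ] using this
      rw [this] at hXtr
      simp at hXtr
    obtain ⟨f, u, hu0, hub⟩ :=
      geometric_hahn_banach_point_closed hSconv hScompact.isClosed h0S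
    have hupos : (0:ℝ) < u := by simpa using hu0
    set lam : Fin m → ℝ := fun i => f (Pi.single i 1) with hlam
    have hf : ∀ y : Fin m → ℝ, f y = ∑ i, y i * lam i := by
      intro y
      conv_lhs => rw [pi_eq_sum_univ y]
      rw [map_sum]
      refine Finset.sum_congr rfl fun i _ => ?_
      rw [_root_.map_smul, smul_eq_mul]
      simp only [hlam]
      have he : (fun j => if i = j then (1:ℝ) else 0) = Pi.single i 1 := by
        funext j; simp [Pi.single_apply, eq_comm]
      rw [he]
    refine ⟨lam, PosDef.of_dotProduct_mulVec_pos ?_ ?_⟩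
    · show (∑ i, lam i • A i)ᴴ = _
      simp only [conjTranspose_sum, conjTranspose_smul]
      refine Finset.sum_congr rfl fun i _ => ?_
      rw [star_trivial, Matrix.conjTranspose_eq_transpose_of_trivial, (hA i).eq]
    · intro x hx
      have hxx : (0:ℝ) < x ⬝ᵥ x := by
        obtain ⟨k, hk⟩ := Function.ne_iff.mp hx
        refine Finset.sum_pos' (fun l _ => mul_self_nonneg (x l)) ⟨k, Finset.mem_univ k, ?_⟩
        have hxk : x k ≠ 0 := by simpa using hk
        exact mul_self_pos.mpr hxk
      set c : ℝ := (x ⬝ᵥ x)⁻¹ with hc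
      have hcpos : 0 < c := inv_pos.mpr hxx
      set M : Matrix (Fin n) (Fin n) ℝ := vecMulVec x x with hM
      set X : Matrix (Fin n) (Fin n) ℝ := c • M with hX
      have hMmv : ∀ v : Fin n → ℝ, M *ᵥ v = fun i => x i * (x ⬝ᵥ v) := by
        intro v
        funext i
        simp only [hM, mulVec, dotProduct, vecMulVec_apply, Finset.mul_sum]
        exact Finset.sum_congr rfl fun j _ => by ring
      have hXpsd : X.PosSemidef := by
        refine (psd_iff X).mpr ⟨fun i j => ?_, fun v => ?_⟩
        · simp only [hX, hM, Matrix.smul_apply, vecMulVec_apply, smul_eq_mul]; ring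
        · rw [hX, Matrix.smul_mulVec, dotProduct_smul, hMmv v]
          have : (v ⬝ᵥ fun i => x i * (x ⬝ᵥ v)) = (x ⬝ᵥ v) * (x ⬝ᵥ v) := by
            simp only [dotProduct]
            conv_rhs => rw [Finset.sum_mul]
            exact Finset.sum_congr rfl fun j _ => by ring
          rw [this, smul_eq_mul]
          exact mul_nonneg hcpos.le (mul_self_nonneg _)
      have hXtr : X.trace = 1 := by
        have : M.trace = x ⬝ᵥ x := by
          simp [hM, Matrix.trace, Matrix.diag, vecMulVec_apply, dotProduct]
        rw [hX, Matrix.trace_smul, this, smul_eq_mul, hc, inv_mul_cancel₀ (ne_of_gt hxx)]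
      have hmem : φ X ∈ φ '' K := ⟨X, ⟨hXpsd, hXtr⟩, rfl⟩
      have hu : u < f (φ X) := hub _ hmem
      have htr : Matrix.trace ((∑ i, lam i • A i) * X) = f (φ X) := by
        rw [hf (φ X), Finset.sum_mul]
        simp only [smul_mul_assoc, Matrix.trace_sum, Matrix.trace_smul, smul_eq_mul, hφ]
        exact Finset.sum_congr rfl fun i _ => by ring
      have hkey : Matrix.trace ((∑ i, lam i • A i) * X) =
          c * (x ⬝ᵥ (∑ i, lam i • A i) *ᵥ x) := by
        rw [hX, Matrix.mul_smul, Matrix.trace_smul, smul_eq_mul]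
        congr 1
        simp only [hM, Matrix.trace, Matrix.diag, Matrix.mul_apply, vecMulVec_apply,
          dotProduct, mulVec, Finset.mul_sum]
        refine Finset.sum_congr rfl fun i _ => Finset.sum_congr rfl fun j _ => by ring
      have : 0 < c * (x ⬝ᵥ (∑ i, lam i • A i) *ᵥ x) := by
        rw [← hkey, htr]; linarith
      have hfin : 0 < x ⬝ᵥ (∑ i, lam i • A i) *ᵥ x := by
        by_contra hcon
        push_neg at hcon
        nlinarith
      simpa using hfin
  · rintro ⟨lam, hP⟩ X hXpsd hX0
    have htr0 : ∀ i, Matrix.trace (A i * X) = 0 := by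
      intro i
      have := congrFun hX0 i
      simpa using this
    apply trace_zero_of_posDef hP hXpsd
    rw [Finset.sum_mul]
    simp only [smul_mul_assoc, Matrix.trace_sum, Matrix.trace_smul, smul_eq_mul]
    exact Finset.sum_eq_zero fun i _ => by rw [htr0 i, mul_zero]
end
end

section
/- Let G ∈ ℝ^{p×n}, f₀ ∈ ℝ^p, and set X := { x ∈ {0,1}ⁿ : Gx = f₀ }. Define the linear map 𝒜 : Sym(n)×ℝⁿ → ℝ^{n+p+p} by 𝒜(Xb,x) := ( diag(Xb) − x, Gx, diag(G·Xb·Gᵀ) ) and b := ( 0, f₀, f₀∘f₀ ) (with ∘ the entrywise product). Then: (N1) every pair (x,Xb) with [[1,xᵀ],[x,Xb]] ∈ 𝒢(X) satisfies 𝒜(Xb,x) = b, and (N2) the only positive semidefinite Xb with 𝒜(Xb,0) = 0 is Xb = 0. -/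
noncomputable section

open Matrix

/-- The linear functional packaging the constraints of `𝒜` read off a bordered matrix. -/
def constrMap {n p : ℕ} (G : Matrix (Fin p) (Fin n) ℝ) :
    Matrix (Unit ⊕ Fin n) (Unit ⊕ Fin n) ℝ →ₗ[ℝ]
      (Fin n → ℝ) × (Fin p → ℝ) × (Fin p → ℝ) where
  toFun M :=
    ((fun i => M (Sum.inr i) (Sum.inr i) - M (Sum.inl ()) (Sum.inr i)),
     (fun k => ∑ j, G k j * M (Sum.inl ()) (Sum.inr j)),
     (fun k => ∑ i, ∑ j, G k i * M (Sum.inr i) (Sum.inr j) * G k j))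
  map_add' M N := by
    ext i
    all_goals simp only [Prod.fst_add, Prod.snd_add, Pi.add_apply, Matrix.add_apply]
    · ring
    · rw [← Finset.sum_add_distrib]; exact Finset.sum_congr rfl fun j _ => by ring
    · rw [← Finset.sum_add_distrib]
      exact Finset.sum_congr rfl fun j _ => by
        rw [← Finset.sum_add_distrib]; exact Finset.sum_congr rfl fun l _ => by ring
  map_smul' c M := by
    ext i
    all_goals simp only [Prod.smul_fst, Prod.smul_snd, Pi.smul_apply, Matrix.smul_apply,
      smul_eq_mul, RingHom.id_apply]
    · ring
    · rw [Finset.mul_sum]; exact Finset.sum_congr rfl fun j _ => by ring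
    · rw [Finset.mul_sum]
      exact Finset.sum_congr rfl fun j _ => by
        rw [Finset.mul_sum]; exact Finset.sum_congr rfl fun l _ => by ring

/-- **Conditions (N1) and (N2) hold for binary sets with linear equations (Proposition 2, first
instance).**  For `X = {x ∈ {0,1}ⁿ : G x = f₀}` and
`𝒜(Xb, x) = (diag Xb − x, G x, diag (G Xb Gᵀ))`, `b = (0, f₀, f₀ ∘ f₀)`:
(N1) every `(x, Xb)` with `[[1,xᵀ],[x,Xb]] ∈ 𝒢(X)` satisfies `𝒜(Xb, x) = b`, and
(N2) the only positive semidefinite `Xb` with `𝒜(Xb, 0) = 0` is `Xb = 0`. -/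
theorem binary_linear_instance_satisfies_N1_N2 {n p : ℕ}
    (G : Matrix (Fin p) (Fin n) ℝ) (f₀ : Fin p → ℝ)
    (X : Set (Fin n → ℝ))
    (hX : X = {x | (∀ i, x i = 0 ∨ x i = 1) ∧ G.mulVec x = f₀})
    (calA : Matrix (Fin n) (Fin n) ℝ × (Fin n → ℝ) →
      (Fin n → ℝ) × (Fin p → ℝ) × (Fin p → ℝ))
    (hcalA : calA = fun pr =>
      ((fun i => pr.1 i i - pr.2 i), G.mulVec pr.2, fun i => (G * pr.1 * Gᵀ) i i))
    (b : (Fin n → ℝ) × (Fin p → ℝ) × (Fin p → ℝ))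
    (hb : b = (0, f₀, fun i => f₀ i * f₀ i)) :
    (∀ (x : Fin n → ℝ) (Xb : Matrix (Fin n) (Fin n) ℝ),
      corner x Xb ∈ GSet X → calA (Xb, x) = b) ∧
    (∀ Xb : Matrix (Fin n) (Fin n) ℝ, Xb.PosSemidef → calA (Xb, 0) = 0 → Xb = 0) := by
  constructor
  · intro x Xb hmem
    set L := constrMap (n := n) (p := p) G with hL
    have hT : GSet X ⊆ L ⁻¹' {b} := by
      apply closure_minimal
      · apply convexHull_min
        · rintro M ⟨s, hs, rfl⟩
          rw [hX] at hs
          obtain ⟨hs01, hGs⟩ := hs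
          have hsq : ∀ i, s i * s i = s i := by
            intro i; rcases hs01 i with h | h <;> rw [h] <;> ring
          simp only [Set.mem_preimage, Set.mem_singleton_iff, hb]
          have : L (vecMulVec (lift1 s) (lift1 s)) =
              ((fun i => s i * s i - s i), (fun k => ∑ j, G k j * s j),
               (fun k => ∑ i, ∑ j, G k i * (s i * s j) * G k j)) := by
            simp [hL, constrMap, vecMulVec_apply, lift1]
          rw [this]
          refine Prod.ext ?_ (Prod.ext ?_ ?_)
          · funext i; simp [hsq i]
          · funext k
            have := congrFun hGs k
            simpa [Matrix.mulVec, dotProduct, mul_comm] using this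
          · funext k
            have hk : ∑ j, G k j * s j = f₀ k := by
              have := congrFun hGs k
              simpa [Matrix.mulVec, dotProduct, mul_comm] using this
            calc ∑ i, ∑ j, G k i * (s i * s j) * G k j
                = (∑ i, G k i * s i) * (∑ j, G k j * s j) := by
                  rw [Finset.sum_mul_sum]
                  apply Finset.sum_congr rfl; intro i _
                  apply Finset.sum_congr rfl; intro j _; ring
              _ = f₀ k * f₀ k := by rw [hk]
        · intro M hM N hN a c ha hc hac
          simp only [Set.mem_preimage, Set.mem_singleton_iff] at hM hN ⊢
          rw [map_add, _root_.map_smul, _root_.map_smul, hM, hN, ← add_smul, hac, one_smul]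
      · have : Continuous L := L.continuous_of_finiteDimensional
        exact (isClosed_singleton).preimage this
    have h1 : L (corner x Xb) = b := hT hmem
    have hcor : L (corner x Xb) =
        ((fun i => Xb i i - x i), (fun k => ∑ j, G k j * x j),
         (fun k => ∑ i, ∑ j, G k i * Xb i j * G k j)) := by
      simp [hL, constrMap, corner]
    rw [hcor] at h1
    rw [hcalA, hb]
    rw [hb] at h1
    simp only [Prod.mk.injEq] at h1
    refine Prod.ext ?_ (Prod.ext ?_ ?_)
    · simpa using h1.1
    · funext k
      have := congrFun h1.2.1 k
      simpa [Matrix.mulVec, dotProduct, mul_comm] using this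
    · funext k
      have := congrFun h1.2.2 k
      simp only [Matrix.mul_apply, Matrix.transpose_apply]
      rw [← this]
      rw [Finset.sum_comm]
      apply Finset.sum_congr rfl; intro j _
      rw [Finset.sum_mul]
  · intro Xb hpsd hA0
    rw [hcalA] at hA0
    have hdiag : ∀ i, Xb i i = 0 := by
      intro i
      have := congrFun (congrArg Prod.fst hA0) i
      simpa using this
    ext i j
    have hcol : Xb *ᵥ Pi.single j 1 = 0 := by
      rw [← hpsd.dotProduct_mulVec_zero_iff]
      simp [Matrix.mulVec_single, dotProduct, Pi.single_apply, hdiag j]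
    have := congrFun hcol i
    simpa [Matrix.mulVec_single, mul_comm] using this
end
end

section
/- Let X ⊆ ℝⁿ, let 𝒜 : Sym(n)×ℝⁿ → ℝᵐ be a linear map and b ∈ ℝᵐ, and assume: (N1) every pair (x,Xb) with [[1,xᵀ],[x,Xb]] ∈ 𝒢(X) satisfies 𝒜(Xb,x) = b, and (N2) the only positive semidefinite Xb with 𝒜(Xb,0) = 0 is Xb = 0. Then X is bounded. -/
noncomputable section

open Matrix

open Filter

lemma vecMulVec_posSemidef {n : ℕ} (u : Fin n → ℝ) : (vecMulVec u u).PosSemidef := by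
  refine .of_dotProduct_mulVec_nonneg ?_ ?_
  · ext i j; simp [vecMulVec_apply, mul_comm]
  · intro x
    have : star x ⬝ᵥ (vecMulVec u u).mulVec x = (u ⬝ᵥ x) * (u ⬝ᵥ x) := by
      simp [dotProduct, mulVec, vecMulVec_apply, Finset.mul_sum, Finset.sum_mul]
      rw [Finset.sum_comm]
      congr 1; ext i; congr 1; ext j; ring
    rw [this]; exact mul_self_nonneg _

/-- **Conditions (N1) and (N2) imply boundedness of `X` (Proposition 3, first part).**
If the linear map `𝒜` and the right-hand side `b` satisfy (N1): every `(x, Xb)` with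
`[[1,xᵀ],[x,Xb]] ∈ 𝒢(X)` fulfills `𝒜(Xb, x) = b`, and (N2): the only positive semidefinite
`Xb` with `𝒜(Xb, 0) = 0` is `Xb = 0`, then `X` is bounded. -/
theorem N1_N2_imply_bounded {n m : ℕ} (X : Set (Fin n → ℝ))
    (𝒜 : (Matrix (Fin n) (Fin n) ℝ × (Fin n → ℝ)) →ₗ[ℝ] (Fin m → ℝ)) (b : Fin m → ℝ)
    (hN1 : ∀ (x : Fin n → ℝ) (Xb : Matrix (Fin n) (Fin n) ℝ),
      corner x Xb ∈ GSet X → 𝒜 (Xb, x) = b)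
    (hN2 : ∀ Xb : Matrix (Fin n) (Fin n) ℝ, Xb.PosSemidef → 𝒜 (Xb, 0) = 0 → Xb = 0) :
    Bornology.IsBounded X := by
  by_contra hB
  -- get an unbounded sequence in X
  rw [isBounded_iff_forall_norm_le] at hB
  push_neg at hB
  choose x hxX hxn using fun k : ℕ => hB (k + 1)
  have hxpos : ∀ k, (0 : ℝ) < ‖x k‖ := fun k =>
    lt_of_le_of_lt (by positivity) (hxn k)
  have hx1 : ∀ k, (1 : ℝ) ≤ ‖x k‖ := fun k =>
    le_trans (by exact_mod_cast le_add_of_nonneg_left (Nat.cast_nonneg k)) (hxn k).le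
  -- unit vectors; extract convergent subsequence
  set v : ℕ → (Fin n → ℝ) := fun k => ‖x k‖⁻¹ • x k with hv
  have hvmem : ∀ k, v k ∈ Metric.sphere (0 : Fin n → ℝ) 1 := by
    intro k
    simp only [Metric.mem_sphere, dist_zero_right, hv, norm_smul, norm_inv, norm_norm]
    field_simp
    exact div_self (hxpos k).ne'
  obtain ⟨u, humem, φ, hφ, hu⟩ :=
    (isCompact_sphere (0 : Fin n → ℝ) 1).tendsto_subseq hvmem
  have hunorm : ‖u‖ = 1 := by simpa using humem
  -- x₀ : base point
  have hX0 : X.Nonempty := ⟨x 0, hxX 0⟩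
  obtain ⟨x₀, hx₀⟩ := hX0
  -- norms along subsequence tend to infinity
  have hnorm_top : Tendsto (fun k => ‖x (φ k)‖) atTop atTop := by
    apply tendsto_atTop_mono (fun k => (hxn (φ k)).le.trans' ?_)
    · exact tendsto_atTop_add_const_right _ 1 tendsto_natCast_atTop_atTop
    · exact_mod_cast Nat.add_le_add_right (hφ.le_apply) 1
  have hcinv : Tendsto (fun k => ‖x (φ k)‖⁻¹) atTop (nhds 0) :=
    hnorm_top.inv_tendsto_atTop
  -- the approximating matrices
  set S : Set (Matrix (Unit ⊕ Fin n) (Unit ⊕ Fin n) ℝ) :=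
    {M | ∃ s ∈ X, M = vecMulVec (lift1 s) (lift1 s)} with hS
  set A₀ : Matrix (Unit ⊕ Fin n) (Unit ⊕ Fin n) ℝ := vecMulVec (lift1 x₀) (lift1 x₀) with hA₀
  set lam : ℕ → ℝ := fun k => (‖x (φ k)‖ ^ 2)⁻¹ with hlam
  have hlam01 : ∀ k, lam k ∈ Set.Icc (0:ℝ) 1 := by
    intro k
    constructor
    · positivity
    · rw [hlam]
      have : (1:ℝ) ≤ ‖x (φ k)‖ ^ 2 := one_le_pow₀ (hx1 (φ k))
      exact inv_le_one_of_one_le₀ this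
  set M : ℕ → Matrix (Unit ⊕ Fin n) (Unit ⊕ Fin n) ℝ := fun k =>
    (1 - lam k) • A₀ + lam k • vecMulVec (lift1 (x (φ k))) (lift1 (x (φ k))) with hM
  have hMmem : ∀ k, M k ∈ convexHull ℝ S := by
    intro k
    exact (convex_convexHull ℝ S)
      (subset_convexHull ℝ S ⟨x₀, hx₀, rfl⟩)
      (subset_convexHull ℝ S ⟨x (φ k), hxX (φ k), rfl⟩)
      (by linarith [(hlam01 k).2]) (hlam01 k).1 (by ring)
  -- the limit matrix
  set w : (Unit ⊕ Fin n) → ℝ := Sum.elim (fun _ => (0:ℝ)) u with hw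
  set L : Matrix (Unit ⊕ Fin n) (Unit ⊕ Fin n) ℝ := A₀ + vecMulVec w w with hL
  -- rewrite lam k • vecMulVec = vecMulVec of scaled vector
  set wk : ℕ → (Unit ⊕ Fin n) → ℝ := fun k =>
    Sum.elim (fun _ => ‖x (φ k)‖⁻¹) (fun i => ‖x (φ k)‖⁻¹ * x (φ k) i) with hwk
  have hMeq : ∀ k, M k = (1 - lam k) • A₀ + vecMulVec (wk k) (wk k) := by
    intro k
    rw [hM]
    congr 1
    ext i j
    simp only [Matrix.smul_apply, vecMulVec_apply, smul_eq_mul]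
    rcases i with i | i <;> rcases j with j | j <;>
      simp [hwk, lift1, hlam, vecMulVec_apply, sq, mul_inv] <;> ring
  -- convergence wk → w
  have hwk_tendsto : Tendsto wk atTop (nhds w) := by
    rw [tendsto_pi_nhds]
    rintro (i | i)
    · simpa [hwk, hw] using hcinv
    · have := (tendsto_pi_nhds.mp hu) i
      simpa [hwk, hw, hv] using this
  have hlam0 : Tendsto lam atTop (nhds 0) := by
    have : lam = fun k => ‖x (φ k)‖⁻¹ * ‖x (φ k)‖⁻¹ := by
      funext k; simp [hlam, sq, mul_inv]
    rw [this]
    simpa using hcinv.mul hcinv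
  have hMtendsto : Tendsto M atTop (nhds L) := by
    have h1 : Tendsto (fun k => (1 - lam k) • A₀) atTop (nhds ((1:ℝ) • A₀)) :=
      Tendsto.smul (by simpa using (tendsto_const_nhds.sub hlam0)) tendsto_const_nhds
    have h2 : Tendsto (fun k => vecMulVec (wk k) (wk k)) atTop
        (nhds (vecMulVec w w)) := by
      refine tendsto_pi_nhds.mpr ?_
      intro i
      rw [tendsto_pi_nhds]
      intro j
      have : ∀ k, vecMulVec (wk k) (wk k) i j = wk k i * wk k j := fun _ => rfl
      simp only [this, vecMulVec_apply]
      exact ((tendsto_pi_nhds.mp hwk_tendsto) i).mul ((tendsto_pi_nhds.mp hwk_tendsto) j)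
    have := h1.add h2
    rw [one_smul] at this
    convert this using 1
    funext k
    exact hMeq k
  -- L ∈ GSet X
  have hLmem : L ∈ GSet X := mem_closure_of_tendsto hMtendsto (Eventually.of_forall hMmem)
  -- L = corner x₀ Xb₁
  set Xb₁ : Matrix (Fin n) (Fin n) ℝ := vecMulVec x₀ x₀ + vecMulVec u u with hXb₁
  have hLcorner : L = corner x₀ Xb₁ := by
    ext i j
    rcases i with i | i <;> rcases j with j | j <;>
      simp [hL, hA₀, hw, corner, vecMulVec_apply, lift1, fromBlocks, hXb₁, Matrix.add_apply]
  -- corner x₀ (vecMulVec x₀ x₀) ∈ GSet X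
  have hcorner0 : corner x₀ (vecMulVec x₀ x₀) = A₀ := by
    ext i j
    rcases i with i | i <;> rcases j with j | j <;>
      simp [hA₀, corner, vecMulVec_apply, lift1, fromBlocks]
  have hA₀mem : A₀ ∈ GSet X :=
    subset_closure (subset_convexHull ℝ S ⟨x₀, hx₀, rfl⟩)
  have e1 : 𝒜 (Xb₁, x₀) = b := hN1 x₀ Xb₁ (hLcorner ▸ hLmem)
  have e2 : 𝒜 (vecMulVec x₀ x₀, x₀) = b := hN1 x₀ _ (hcorner0 ▸ hA₀mem)
  have e3 : 𝒜 (vecMulVec u u, 0) = 0 := by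
    have : (vecMulVec u u, (0 : Fin n → ℝ)) = (Xb₁, x₀) - (vecMulVec x₀ x₀, x₀) := by
      rw [Prod.mk_sub_mk, hXb₁]
      simp
    rw [this, map_sub, e1, e2, sub_self]
  have := hN2 _ (vecMulVec_posSemidef u) e3
  -- derive u = 0, contradiction with ‖u‖ = 1
  have hu0 : u = 0 := by
    funext i
    have := congrFun (congrFun this i) i
    simp only [vecMulVec_apply, Matrix.zero_apply] at this
    exact mul_self_eq_zero.mp this
  rw [hu0] at hunorm
  simp at hunorm
end
end

section
/- Let X ⊆ ℝⁿ, let 𝒜 : Sym(n)×ℝⁿ → ℝᵐ be a linear map and b ∈ ℝᵐ, and assume: (N1) every pair (x,Xb) with [[1,xᵀ],[x,Xb]] ∈ 𝒢(X) satisfies 𝒜(Xb,x) = b, and (N2) the only positive semidefinite Xb with 𝒜(Xb,0) = 0 is Xb = 0. Then every point of X is an extreme point of conv(X). -/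
noncomputable section

open Matrix

lemma corner_comb {d : Type*} (a c : ℝ) (hac : a + c = 1) (y z : d → ℝ)
    (Yb Zb : Matrix d d ℝ) :
    a • corner y Yb + c • corner z Zb = corner (a • y + c • z) (a • Yb + c • Zb) := by
  ext (i | i) (j | j) <;>
    simp [corner, Matrix.add_apply, Matrix.smul_apply, smul_eq_mul, hac]

lemma corner_rank_one {d : Type*} (x : d → ℝ) :
    corner x (vecMulVec x x) = vecMulVec (lift1 x) (lift1 x) := by
  ext (i | i) (j | j) <;> simp [corner, vecMulVec, lift1]

/-- Key half: every point of the convex hull lifts to a point of `GSet` with PSD defect. -/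
lemma exists_corner_mem {d : Type*} [Fintype d] {X : Set (d → ℝ)} {y : d → ℝ}
    (hy : y ∈ convexHull ℝ X) :
    ∃ Yb : Matrix d d ℝ, corner y Yb ∈ GSet X ∧ Yb.IsHermitian ∧
      ∀ v : d → ℝ, (y ⬝ᵥ v) ^ 2 ≤ v ⬝ᵥ Yb *ᵥ v := by
  rw [convexHull_eq] at hy
  obtain ⟨ι, t, w, z, hw, hsum, hz, hcm⟩ := hy
  have hcm' : y = ∑ i ∈ t, w i • z i := by
    rw [← hcm, Finset.centerMass_eq_of_sum_1 _ _ hsum]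
  refine ⟨∑ i ∈ t, w i • vecMulVec (z i) (z i), ?_, ?_, ?_⟩
  · -- membership in GSet
    have hmem : t.centerMass w (fun i => vecMulVec (lift1 (z i)) (lift1 (z i)))
        ∈ convexHull ℝ {M : Matrix (Unit ⊕ d) (Unit ⊕ d) ℝ |
            ∃ s ∈ X, M = vecMulVec (lift1 s) (lift1 s)} :=
      t.centerMass_mem_convexHull hw (by rw [hsum]; norm_num)
        (fun i hi => ⟨z i, hz i hi, rfl⟩)
    rw [Finset.centerMass_eq_of_sum_1 _ _ hsum] at hmem
    have : corner y (∑ i ∈ t, w i • vecMulVec (z i) (z i))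
        = ∑ i ∈ t, w i • vecMulVec (lift1 (z i)) (lift1 (z i)) := by
      ext (i | i) (j | j) <;>
        simp [corner, vecMulVec, lift1, Matrix.sum_apply, hsum, hcm',
          Finset.sum_apply, Pi.smul_apply, smul_eq_mul]
    rw [this]
    exact subset_closure hmem
  · -- Hermitian
    ext i j
    simp [Matrix.IsHermitian, Matrix.conjTranspose, Matrix.sum_apply, vecMulVec, mul_comm]
  · -- quadratic bound
    intro v
    have hvmv : ∀ u : d → ℝ, v ⬝ᵥ (vecMulVec u u) *ᵥ v = (u ⬝ᵥ v) ^ 2 := by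
      intro u
      simp only [Matrix.mulVec, dotProduct, vecMulVec_apply, sq, Finset.sum_mul,
        Finset.mul_sum]
      rw [Finset.sum_comm]
      exact Finset.sum_congr rfl fun i _ => Finset.sum_congr rfl fun j _ => by ring
    have hquad : v ⬝ᵥ (∑ i ∈ t, w i • vecMulVec (z i) (z i)) *ᵥ v
        = ∑ i ∈ t, w i * (z i ⬝ᵥ v) ^ 2 := by
      have h1 : (∑ i ∈ t, w i • vecMulVec (z i) (z i)) *ᵥ v
          = ∑ i ∈ t, w i • ((vecMulVec (z i) (z i)) *ᵥ v) := by
        ext j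
        simp only [Matrix.mulVec, dotProduct, Matrix.sum_apply, Finset.sum_apply,
          Pi.smul_apply, Matrix.smul_apply, smul_eq_mul, Finset.sum_mul, Finset.mul_sum]
        rw [Finset.sum_comm]
        exact Finset.sum_congr rfl fun i _ => Finset.sum_congr rfl fun k _ => by ring
      have h2 : v ⬝ᵥ (∑ i ∈ t, w i • ((vecMulVec (z i) (z i)) *ᵥ v))
          = ∑ i ∈ t, v ⬝ᵥ (w i • ((vecMulVec (z i) (z i)) *ᵥ v)) := by
        simp only [dotProduct, Finset.sum_apply, Finset.mul_sum]
        rw [Finset.sum_comm]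
      rw [h1, h2]
      exact Finset.sum_congr rfl fun i _ => by
        rw [dotProduct_smul, smul_eq_mul, hvmv (z i)]
    rw [hquad]
    have hydot : y ⬝ᵥ v = ∑ i ∈ t, w i * (z i ⬝ᵥ v) := by
      rw [hcm']
      simp [dotProduct, Finset.sum_apply, Finset.sum_mul, Finset.mul_sum]
      rw [Finset.sum_comm]
      exact Finset.sum_congr rfl fun i _ => Finset.sum_congr rfl fun j _ => by ring
    rw [hydot]
    -- Jensen for the square function
    have := (even_two.convexOn_pow (𝕜 := ℝ)).map_centerMass_le (t := t) (w := w)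
      (p := fun i => z i ⬝ᵥ v) hw (by rw [hsum]; norm_num) (fun _ _ => Set.mem_univ _)
    rw [Finset.centerMass_eq_of_sum_1 _ _ hsum, Finset.centerMass_eq_of_sum_1 _ _ hsum] at this
    simpa [smul_eq_mul] using this

/-- **Conditions (N1) and (N2) imply `X` consists of extreme points of its convex hull
(Proposition 3, second part).**  If the linear map `𝒜` and right-hand side `b` satisfy
(N1): every `(x, Xb)` with `[[1,xᵀ],[x,Xb]] ∈ 𝒢(X)` fulfills `𝒜(Xb, x) = b`, and
(N2): the only positive semidefinite `Xb` with `𝒜(Xb, 0) = 0` is `Xb = 0`, then every point of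
`X` is an extreme point of `convexHull ℝ X`. -/
theorem N1_N2_imply_extreme_points {n m : ℕ} (X : Set (Fin n → ℝ))
    (𝒜 : (Matrix (Fin n) (Fin n) ℝ × (Fin n → ℝ)) →ₗ[ℝ] (Fin m → ℝ)) (b : Fin m → ℝ)
    (hN1 : ∀ (x : Fin n → ℝ) (Xb : Matrix (Fin n) (Fin n) ℝ),
      corner x Xb ∈ GSet X → 𝒜 (Xb, x) = b)
    (hN2 : ∀ Xb : Matrix (Fin n) (Fin n) ℝ, Xb.PosSemidef → 𝒜 (Xb, 0) = 0 → Xb = 0) :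
    ∀ x ∈ X, x ∈ Set.extremePoints ℝ (convexHull ℝ X) := by
  intro x hx
  rw [mem_extremePoints]
  refine ⟨subset_convexHull ℝ X hx, fun y hy z hz hseg => ?_⟩
  obtain ⟨a, c, ha, hc, hac, hxeq⟩ := hseg
  obtain ⟨Yb, hYmem, hYherm, hYq⟩ := exists_corner_mem hy
  obtain ⟨Zb, hZmem, hZherm, hZq⟩ := exists_corner_mem hz
  -- the combined corner matrix lies in GSet X
  have hGconv : Convex ℝ (GSet X) := (convex_convexHull ℝ _).closure
  have hWmem : corner x (a • Yb + c • Zb) ∈ GSet X := by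
    rw [← hxeq, ← corner_comb a c hac]
    exact hGconv hYmem hZmem ha.le hc.le hac
  have hxself : corner x (vecMulVec x x) ∈ GSet X := by
    rw [corner_rank_one]
    exact subset_closure (subset_convexHull ℝ _ ⟨x, hx, rfl⟩)
  set D : Matrix (Fin n) (Fin n) ℝ := a • Yb + c • Zb - vecMulVec x x with hD
  have hAD : 𝒜 (D, 0) = 0 := by
    have : (D, (0 : Fin n → ℝ)) =
        ((a • Yb + c • Zb, x) - (vecMulVec x x, x) : _ × _) := by
      simp [hD, Prod.ext_iff]
    rw [this, map_sub, hN1 x _ hWmem, hN1 x _ hxself, sub_self]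
  -- quadratic form computations
  have hxdot : ∀ v : Fin n → ℝ, x ⬝ᵥ v = a * (y ⬝ᵥ v) + c * (z ⬝ᵥ v) := by
    intro v
    rw [← hxeq]
    simp [add_dotProduct, smul_dotProduct, smul_eq_mul]
  have hDq : ∀ v : Fin n → ℝ,
      v ⬝ᵥ D *ᵥ v = a * (v ⬝ᵥ Yb *ᵥ v) + c * (v ⬝ᵥ Zb *ᵥ v) - (x ⬝ᵥ v) ^ 2 := by
    intro v
    have hvx : v ⬝ᵥ (vecMulVec x x) *ᵥ v = (x ⬝ᵥ v) ^ 2 := by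
      simp only [Matrix.mulVec, dotProduct, vecMulVec_apply, sq, Finset.sum_mul,
        Finset.mul_sum]
      rw [Finset.sum_comm]
      exact Finset.sum_congr rfl fun i _ => Finset.sum_congr rfl fun j _ => by ring
    simp [hD, Matrix.sub_mulVec, Matrix.add_mulVec, Matrix.smul_mulVec,
      dotProduct_sub, dotProduct_add, dotProduct_smul, smul_eq_mul, hvx]
  have hDpsd : D.PosSemidef := by
    rw [posSemidef_iff_dotProduct_mulVec]
    constructor
    · -- Hermitian
      ext i j
      simp only [hD, conjTranspose_apply, Matrix.sub_apply, Matrix.add_apply,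
        Matrix.smul_apply, vecMulVec_apply, smul_eq_mul, star_trivial]
      rw [← hYherm.apply i j, ← hZherm.apply i j]
      simp [mul_comm (x j) (x i)]
    · intro v
      have hv : star v = v := rfl
      rw [hv, hDq v, hxdot v]
      nlinarith [hYq v, hZq v, sq_nonneg (y ⬝ᵥ v - z ⬝ᵥ v), mul_pos ha hc,
        mul_le_mul_of_nonneg_left (hYq v) ha.le, mul_le_mul_of_nonneg_left (hZq v) hc.le]
  have hD0 : D = 0 := hN2 D hDpsd hAD
  -- conclude y ⬝ᵥ v = z ⬝ᵥ v for all v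
  have hdot : ∀ v : Fin n → ℝ, y ⬝ᵥ v = z ⬝ᵥ v := by
    intro v
    have h0 : v ⬝ᵥ D *ᵥ v = 0 := by rw [hD0]; simp
    rw [hDq v, hxdot v] at h0
    set Y := y ⬝ᵥ v with hY
    set Z := z ⬝ᵥ v with hZ
    have hc' : c = 1 - a := by linarith
    have key : a * c * (Y - Z) ^ 2 = a * Y ^ 2 + c * Z ^ 2 - (a * Y + c * Z) ^ 2 := by
      rw [hc']; ring
    have h1 : a * c * (Y - Z) ^ 2 ≤ 0 := by
      have h2 : a * Y ^ 2 ≤ a * (v ⬝ᵥ Yb *ᵥ v) := mul_le_mul_of_nonneg_left (hYq v) ha.le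
      have h3 : c * Z ^ 2 ≤ c * (v ⬝ᵥ Zb *ᵥ v) := mul_le_mul_of_nonneg_left (hZq v) hc.le
      rw [key]; linarith
    have h4 : (Y - Z) ^ 2 ≤ 0 := by nlinarith [mul_pos ha hc]
    have h5 : Y - Z = 0 := by nlinarith [sq_nonneg (Y - Z)]
    linarith
  have hyz : y = z := by
    funext j
    have := hdot (Pi.single j 1)
    simpa [dotProduct_single] using this
  subst hyz
  have : x = y := by
    rw [← hxeq]
    rw [← add_smul, hac, one_smul]
  exact ⟨this.symm, this.symm⟩
end
end

section
/- Let U ⊆ ℝ^q be a nonempty compact set. For a symmetric (q+1)×(q+1) matrix Ub, a matrix Ψ ∈ ℝ^{n×(q+1)}, and a symmetric n×n matrix Xb, the block matrix M := [[Ub, Ψᵀ],[Ψ, Xb]] (of size (1+q+n)×(1+q+n)) belongs to 𝒢(U×ℝⁿ) if and only if M is positive semidefinite and Ub ∈ 𝒢(U). -/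
noncomputable section

open Matrix

/-- `𝒢(U × ℝⁿ)`, with the leading coordinate `1` placed in the `U`-block, realized over the
index type `(Unit ⊕ Fin q) ⊕ Fin n`. -/
def GUR (n : ℕ) {q : ℕ} (U : Set (Fin q → ℝ)) :
    Set (Matrix ((Unit ⊕ Fin q) ⊕ Fin n) ((Unit ⊕ Fin q) ⊕ Fin n) ℝ) :=
  closure (convexHull ℝ {M | ∃ u ∈ U, ∃ x : Fin n → ℝ,
    M = vecMulVec (Sum.elim (lift1 u) x) (Sum.elim (lift1 u) x)})

namespace G6Aux

variable {ι : Type*} [Fintype ι]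

open scoped MatrixOrder in
lemma posSemidef_iff_eq_transpose_mul_self {A : Matrix ι ι ℝ} :
    A.PosSemidef ↔ ∃ B : Matrix ι ι ℝ, A = Bᴴ * B := by
  classical
  constructor
  · intro h
    obtain ⟨B, hB⟩ := CStarAlgebra.nonneg_iff_eq_star_mul_self.mp h.nonneg
    exact ⟨B, hB⟩
  · rintro ⟨B, rfl⟩
    exact posSemidef_conjTranspose_mul_self B

lemma convex_psd : Convex ℝ {M : Matrix ι ι ℝ | M.PosSemidef} := by
  intro A hA B hB a b ha hb hab
  refine posSemidef_iff_dotProduct_mulVec.mpr ⟨?_, fun x => ?_⟩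
  · have h1 := hA.1; have h2 := hB.1
    unfold Matrix.IsHermitian at *
    rw [conjTranspose_add, conjTranspose_smul, conjTranspose_smul, h1, h2, star_trivial,
      star_trivial]
  · have hAx := hA.dotProduct_mulVec_nonneg x; have hBx := hB.dotProduct_mulVec_nonneg x
    simp only [add_mulVec, smul_mulVec, dotProduct_add, dotProduct_smul, smul_eq_mul]
    exact add_nonneg (mul_nonneg ha hAx) (mul_nonneg hb hBx)

lemma isClosed_psd : IsClosed {M : Matrix ι ι ℝ | M.PosSemidef} := by
  have : {M : Matrix ι ι ℝ | M.PosSemidef}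
      = {M : Matrix ι ι ℝ | Mᴴ = M} ∩ ⋂ x : ι → ℝ, {M | 0 ≤ star x ⬝ᵥ M *ᵥ x} := by
    ext M
    simp [posSemidef_iff_dotProduct_mulVec, Matrix.IsHermitian, Set.mem_iInter]
  rw [this]
  refine IsClosed.inter (isClosed_eq (continuous_id.matrix_conjTranspose) continuous_id) ?_
  refine isClosed_iInter fun x => isClosed_le continuous_const ?_
  exact (continuous_const.dotProduct ((continuous_id.matrix_mulVec continuous_const)))

lemma psd_vecMulVec (w : ι → ℝ) : (vecMulVec w w).PosSemidef := by
  refine posSemidef_iff_dotProduct_mulVec.mpr ⟨?_, ?_⟩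
  · ext i j
    simp [vecMulVec_apply, mul_comm]
  · intro x
    have h1 : vecMulVec w w *ᵥ x = (w ⬝ᵥ x) • w := by
      ext i
      simp only [mulVec, dotProduct, vecMulVec_apply, Pi.smul_apply, smul_eq_mul,
        Finset.sum_mul, Finset.mul_sum]
      exact Finset.sum_congr rfl fun j _ => by ring
    rw [h1, dotProduct_smul, smul_eq_mul, star_trivial]
    rw [dotProduct_comm]
    exact mul_self_nonneg _

lemma mul_vecMulVec {m k l : Type*} [Fintype k] (B : Matrix m k ℝ) (a : k → ℝ) (c : l → ℝ) :
    B * vecMulVec a c = vecMulVec (B *ᵥ a) c := by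
  ext i j
  simp only [Matrix.mul_apply, vecMulVec_apply, mulVec, dotProduct, Finset.sum_mul]
  exact Finset.sum_congr rfl fun x _ => by ring

lemma vecMulVec_mul {m k l : Type*} [Fintype k] (a : l → ℝ) (c : k → ℝ) (D : Matrix k m ℝ) :
    vecMulVec a c * D = vecMulVec a (Dᵀ *ᵥ c) := by
  ext i j
  simp only [Matrix.mul_apply, vecMulVec_apply, mulVec, dotProduct, transpose_apply,
    Finset.mul_sum]
  exact Finset.sum_congr rfl fun x _ => by ring

lemma vecMulVec_sum_elim {p r : Type*} (a : p → ℝ) (b : r → ℝ) (c : p → ℝ) (d : r → ℝ) :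
    vecMulVec (Sum.elim a b) (Sum.elim c d) =
      fromBlocks (vecMulVec a c) (vecMulVec a d) (vecMulVec b c) (vecMulVec b d) := by
  ext i j
  rcases i with i | i <;> rcases j with j | j <;> simp [vecMulVec_apply]

lemma exists_factor {q m : ℕ} {Ub : Matrix (Unit ⊕ Fin q) (Unit ⊕ Fin q) ℝ}
    {Ψ : Matrix (Fin m) (Unit ⊕ Fin q) ℝ}
    (h : ∀ v, Ub *ᵥ v = 0 → Ψ *ᵥ v = 0) : ∃ B : Matrix (Fin m) (Unit ⊕ Fin q) ℝ, Ψ = B * Ub := by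
  classical
  set f := Ub.mulVecLin with hf
  set g := Ψ.mulVecLin with hg
  have hk : LinearMap.ker f ≤ LinearMap.ker g := by
    intro v hv
    simp only [LinearMap.mem_ker, Matrix.mulVecLin_apply] at *
    exact h v hv
  obtain ⟨h₁, hh₁⟩ := LinearMap.exists_extend
    ((((LinearMap.ker f).liftQ g hk)).comp (f.quotKerEquivRange.symm.toLinearMap))
  have key : g = h₁.comp f := by
    apply LinearMap.ext; intro v
    have hmem : f v ∈ LinearMap.range f := LinearMap.mem_range_self f v
    have e1 : h₁ (f v)
        = ((((LinearMap.ker f).liftQ g hk)).comp (f.quotKerEquivRange.symm.toLinearMap))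
            ⟨f v, hmem⟩ := by
      rw [← hh₁]; rfl
    have e2 : f.quotKerEquivRange.symm ⟨f v, hmem⟩ = Submodule.Quotient.mk v := by
      apply f.quotKerEquivRange.injective
      rw [LinearEquiv.apply_symm_apply]
      exact Subtype.ext (f.quotKerEquivRange_apply_mk v).symm
    simp only [LinearMap.comp_apply]
    rw [e1]
    simp only [LinearMap.comp_apply, LinearEquiv.coe_coe, e2, Submodule.liftQ_apply]
  refine ⟨LinearMap.toMatrix' h₁, ?_⟩
  have hm : ((LinearMap.toMatrix' h₁) * Ub).mulVecLin = Ψ.mulVecLin := by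
    rw [Matrix.mulVecLin_mul, ← Matrix.toLin'_apply', Matrix.toLin'_toMatrix', ← hf, ← hg, key]
  exact Matrix.toLin'.injective (R := ℝ)
    (show Matrix.toLin' Ψ = Matrix.toLin' ((LinearMap.toMatrix' h₁) * Ub) by
      rw [Matrix.toLin'_apply', Matrix.toLin'_apply', hm])

variable {q n : ℕ}

/-- Generators of `GUR`. -/
def genB (n : ℕ) {q : ℕ} (U : Set (Fin q → ℝ)) :
    Set (Matrix ((Unit ⊕ Fin q) ⊕ Fin n) ((Unit ⊕ Fin q) ⊕ Fin n) ℝ) :=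
  {M | ∃ u ∈ U, ∃ x : Fin n → ℝ,
    M = vecMulVec (Sum.elim (lift1 u) x) (Sum.elim (lift1 u) x)}

/-- Generators of `GSet`. -/
def genS {q : ℕ} (U : Set (Fin q → ℝ)) :
    Set (Matrix (Unit ⊕ Fin q) (Unit ⊕ Fin q) ℝ) :=
  {M | ∃ s ∈ U, M = vecMulVec (lift1 s) (lift1 s)}

lemma memA' (U : Set (Fin q → ℝ)) (s : Fin n → ℝ)
    {W : Matrix ((Unit ⊕ Fin q) ⊕ Fin n) ((Unit ⊕ Fin q) ⊕ Fin n) ℝ}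
    (hW : W ∈ convexHull ℝ (genB n U)) :
    W + vecMulVec (Sum.elim (fun _ => (0:ℝ)) s) (Sum.elim (fun _ => (0:ℝ)) s)
      ∈ convexHull ℝ (genB n U) := by
  set d : ((Unit ⊕ Fin q) ⊕ Fin n) → ℝ := Sum.elim (fun _ => (0:ℝ)) s with hd
  have key : convexHull ℝ (genB n U) ⊆ {W | W + vecMulVec d d ∈ convexHull ℝ (genB n U)} := by
    apply convexHull_min
    · rintro W ⟨u, hu, x, rfl⟩
      have hid : vecMulVec (Sum.elim (lift1 u) x) (Sum.elim (lift1 u) x) + vecMulVec d d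
          = (1/2 : ℝ) • vecMulVec (Sum.elim (lift1 u) (x + s)) (Sum.elim (lift1 u) (x + s))
            + (1/2 : ℝ) • vecMulVec (Sum.elim (lift1 u) (x - s)) (Sum.elim (lift1 u) (x - s)) := by
        ext i j
        rcases i with i | i <;> rcases j with j | j <;>
          simp [vecMulVec_apply, hd, lift1] <;> ring
      refine Set.mem_setOf_eq ▸ ?_
      rw [hid]
      exact (convex_convexHull ℝ (genB n U))
        (subset_convexHull ℝ _ ⟨u, hu, x + s, rfl⟩)
        (subset_convexHull ℝ _ ⟨u, hu, x - s, rfl⟩)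
        (by norm_num) (by norm_num) (by norm_num)
    · intro W₁ hW₁ W₂ hW₂ a b ha hb hab
      simp only [Set.mem_setOf_eq] at *
      have hrw : (a • W₁ + b • W₂) + vecMulVec d d
          = a • (W₁ + vecMulVec d d) + b • (W₂ + vecMulVec d d) := by
        rw [smul_add, smul_add, add_add_add_comm, ← add_smul, hab, one_smul]
      rw [hrw]
      exact (convex_convexHull ℝ (genB n U)) hW₁ hW₂ ha hb hab
  exact key hW

lemma memA (U : Set (Fin q → ℝ)) (S : Matrix (Fin n) (Fin n) ℝ) (hS : S.PosSemidef)
    {W : Matrix ((Unit ⊕ Fin q) ⊕ Fin n) ((Unit ⊕ Fin q) ⊕ Fin n) ℝ}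
    (hW : W ∈ convexHull ℝ (genB n U)) :
    W + fromBlocks 0 0 0 S ∈ convexHull ℝ (genB n U) := by
  obtain ⟨C, hC⟩ := posSemidef_iff_eq_transpose_mul_self.mp hS
  have hdec : (fromBlocks 0 0 0 S :
      Matrix ((Unit ⊕ Fin q) ⊕ Fin n) ((Unit ⊕ Fin q) ⊕ Fin n) ℝ)
      = ∑ j : Fin n, vecMulVec (Sum.elim (fun _ => (0:ℝ)) (fun i => C j i))
          (Sum.elim (fun _ => (0:ℝ)) (fun i => C j i)) := by
    subst hC
    ext i k
    rcases i with i | i <;> rcases k with k | k <;>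
      simp [Matrix.sum_apply, vecMulVec_apply, Matrix.mul_apply, conjTranspose_apply]
  rw [hdec]
  have main : ∀ F : Finset (Fin n),
      W + ∑ j ∈ F, vecMulVec (Sum.elim (fun _ => (0:ℝ)) (fun i => C j i))
          (Sum.elim (fun _ => (0:ℝ)) (fun i => C j i)) ∈ convexHull ℝ (genB n U) := by
    intro F
    induction F using Finset.induction with
    | empty => simpa using hW
    | @insert a F ha ih =>
        rw [Finset.sum_insert ha, add_comm (vecMulVec _ _), ← add_assoc]
        exact memA' U _ ih
  exact main Finset.univ

end G6Aux

open G6Aux in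
/-- **Lemma 6 (decomposition of `𝒢(U × ℝⁿ)`).**
Let `U ⊆ ℝ^q` be nonempty and compact.  For a symmetric `(q+1)×(q+1)` block `Ub`, a matrix
`Ψ ∈ ℝ^{n×(q+1)}` and a symmetric `n×n` block `Xb`, the block matrix `[[Ub, Ψᵀ], [Ψ, Xb]]`
belongs to `𝒢(U × ℝⁿ)` if and only if it is positive semidefinite and `Ub ∈ 𝒢(U)`. -/
theorem G_of_U_times_Rn_decomposition {n q : ℕ}
    (U : Set (Fin q → ℝ)) (hUne : U.Nonempty) (hUcomp : IsCompact U)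
    (Ub : Matrix (Unit ⊕ Fin q) (Unit ⊕ Fin q) ℝ) (hUb : Ub.IsSymm)
    (Ψ : Matrix (Fin n) (Unit ⊕ Fin q) ℝ)
    (Xb : Matrix (Fin n) (Fin n) ℝ) (hXb : Xb.IsSymm) :
    Matrix.fromBlocks Ub Ψᵀ Ψ Xb ∈ GUR n U ↔
      (Matrix.fromBlocks Ub Ψᵀ Ψ Xb).PosSemidef ∧ Ub ∈ GSet U := by
  have hGUR : GUR n U = closure (convexHull ℝ (genB n U)) := rfl
  have hGSet : GSet U = closure (convexHull ℝ (genS U)) := rfl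
  constructor
  · intro h
    constructor
    · -- positive semidefiniteness
      have hsub : GUR n U ⊆ {M | M.PosSemidef} := by
        rw [hGUR]
        apply closure_minimal (convexHull_min ?_ convex_psd) isClosed_psd
        rintro M ⟨u, hu, x, rfl⟩
        exact psd_vecMulVec _
      exact hsub h
    · -- top-left block
      let tl : Matrix ((Unit ⊕ Fin q) ⊕ Fin n) ((Unit ⊕ Fin q) ⊕ Fin n) ℝ
          →ₗ[ℝ] Matrix (Unit ⊕ Fin q) (Unit ⊕ Fin q) ℝ :=
        { toFun := fun M => M.submatrix Sum.inl Sum.inl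
          map_add' := fun _ _ => rfl
          map_smul' := fun _ _ => rfl }
      have hcont : Continuous tl := tl.continuous_of_finiteDimensional
      have hmapsto : Set.MapsTo tl (convexHull ℝ (genB n U)) (convexHull ℝ (genS U)) := by
        have hsub : convexHull ℝ (genB n U) ⊆ tl ⁻¹' (convexHull ℝ (genS U)) := by
          apply convexHull_min
          · rintro M ⟨u, hu, x, rfl⟩
            refine subset_convexHull ℝ _ ⟨u, hu, ?_⟩
            ext i j
            rfl
          · exact (convex_convexHull ℝ (genS U)).linear_preimage tl
        exact fun M hM => hsub hM
      have := map_mem_closure hcont (hGUR ▸ h) hmapsto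
      have htl : tl (Matrix.fromBlocks Ub Ψᵀ Ψ Xb) = Ub := by
        ext i j
        rfl
      rw [htl] at this
      rw [hGSet]
      exact this
  · rintro ⟨hPSD, hUbG⟩
    -- factor Ψ through Ub
    have hker : ∀ v, Ub *ᵥ v = 0 → Ψ *ᵥ v = 0 := by
      intro v hv
      obtain ⟨A, hA⟩ := posSemidef_iff_eq_transpose_mul_self.mp hPSD
      set A₁ := A.submatrix id Sum.inl with hA1
      set A₂ := A.submatrix id Sum.inr with hA2
      have hUbA : Ub = A₁ᵀ * A₁ := by
        ext i j
        have := congrFun (congrFun hA (Sum.inl i)) (Sum.inl j)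
        simpa [Matrix.mul_apply, conjTranspose_apply, hA1] using this
      have hPsiA : Ψ = A₂ᵀ * A₁ := by
        ext i j
        have := congrFun (congrFun hA (Sum.inr i)) (Sum.inl j)
        simpa [Matrix.mul_apply, conjTranspose_apply, hA1, hA2] using this
      have hdot : v ⬝ᵥ (Ub *ᵥ v) = (A₁ *ᵥ v) ⬝ᵥ (A₁ *ᵥ v) := by
        rw [hUbA, ← mulVec_mulVec, dotProduct_mulVec, vecMul_transpose]
      have h1 : A₁ *ᵥ v = 0 := by
        rw [← dotProduct_self_eq_zero, ← hdot, hv, dotProduct_zero]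
      rw [hPsiA, ← mulVec_mulVec, h1, mulVec_zero]
    obtain ⟨B, hB⟩ := exists_factor hker
    have hPsiT : Ψᵀ = Ub * Bᵀ := by
      rw [hB, transpose_mul, hUb.eq]
    set S := Xb - B * Ub * Bᵀ with hSdef
    have hSpsd : S.PosSemidef := by
      refine posSemidef_iff_dotProduct_mulVec.mpr ⟨?_, ?_⟩
      · have hsymm : Sᵀ = S := by
          rw [hSdef, transpose_sub, hXb.eq, transpose_mul, transpose_mul, transpose_transpose,
            hUb.eq, Matrix.mul_assoc]
        ext i j
        rw [conjTranspose_apply, star_trivial]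
        exact congrFun (congrFun hsymm i) j
      · intro y
        have hq := hPSD.dotProduct_mulVec_nonneg (Sum.elim (-(Bᵀ *ᵥ y)) y)
        have e1 : (Matrix.fromBlocks Ub Ψᵀ Ψ Xb) *ᵥ (Sum.elim (-(Bᵀ *ᵥ y)) y)
            = Sum.elim (0 : (Unit ⊕ Fin q) → ℝ) (S *ᵥ y) := by
          rw [fromBlocks_mulVec]
          simp only [Sum.elim_comp_inl, Sum.elim_comp_inr]
          rw [hPsiT, mulVec_neg, mulVec_mulVec, neg_add_cancel, hB, mulVec_neg,
            mulVec_mulVec, hSdef, sub_mulVec, neg_add_eq_sub]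
        rw [e1, star_trivial, sumElim_dotProduct_sumElim, dotProduct_zero, zero_add] at hq
        simpa using hq
    -- the affine map V ↦ L V + [[0,0],[0,S]]
    let L : Matrix (Unit ⊕ Fin q) (Unit ⊕ Fin q) ℝ
        →ₗ[ℝ] Matrix ((Unit ⊕ Fin q) ⊕ Fin n) ((Unit ⊕ Fin q) ⊕ Fin n) ℝ :=
      { toFun := fun V => Matrix.fromBlocks V (V * Bᵀ) (B * V) (B * V * Bᵀ)
        map_add' := fun V W => by
          simp [Matrix.add_mul, Matrix.mul_add, Matrix.fromBlocks_add]
        map_smul' := fun c V => by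
          simp [Matrix.smul_mul, Matrix.mul_smul, Matrix.fromBlocks_smul] }
    have hLcont : Continuous (fun V => L V + Matrix.fromBlocks 0 0 0 S) :=
      (L.continuous_of_finiteDimensional).add continuous_const
    have hLUb : L Ub + Matrix.fromBlocks 0 0 0 S = Matrix.fromBlocks Ub Ψᵀ Ψ Xb := by
      show Matrix.fromBlocks Ub (Ub * Bᵀ) (B * Ub) (B * Ub * Bᵀ)
          + Matrix.fromBlocks 0 0 0 S = _
      have h4 : B * Ub * Bᵀ + S = Xb := by
        rw [hSdef]; abel
      rw [Matrix.fromBlocks_add, add_zero, add_zero, add_zero, h4, ← hPsiT, ← hB]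
    have hmaps : Set.MapsTo (fun V => L V + Matrix.fromBlocks 0 0 0 S)
        (convexHull ℝ (genS U)) (convexHull ℝ (genB n U)) := by
      have hsub : convexHull ℝ (genS U)
          ⊆ {V | L V + Matrix.fromBlocks 0 0 0 S ∈ convexHull ℝ (genB n U)} := by
        apply convexHull_min
        · rintro V ⟨u, hu, rfl⟩
          have hLgen : L (vecMulVec (lift1 u) (lift1 u))
              = vecMulVec (Sum.elim (lift1 u) (B *ᵥ lift1 u))
                  (Sum.elim (lift1 u) (B *ᵥ lift1 u)) := by
            show Matrix.fromBlocks _ _ _ _ = _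
            rw [vecMulVec_sum_elim, G6Aux.mul_vecMulVec, G6Aux.vecMulVec_mul, G6Aux.vecMulVec_mul,
              transpose_transpose]
          simp only [Set.mem_setOf_eq]
          rw [hLgen]
          exact memA U S hSpsd
            (subset_convexHull ℝ _ ⟨u, hu, B *ᵥ lift1 u, rfl⟩)
        · intro V₁ h₁ V₂ h₂ a b ha hb hab
          simp only [Set.mem_setOf_eq] at h₁ h₂ ⊢
          have hrw : L (a • V₁ + b • V₂) + Matrix.fromBlocks 0 0 0 S
              = a • (L V₁ + Matrix.fromBlocks 0 0 0 S)
                + b • (L V₂ + Matrix.fromBlocks 0 0 0 S) := by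
            rw [map_add, L.map_smul, L.map_smul, smul_add, smul_add, add_add_add_comm,
              ← add_smul, hab, one_smul]
          rw [hrw]
          exact (convex_convexHull ℝ (genB n U)) h₁ h₂ ha hb hab
      exact fun V hV => hsub hV
    have hmem := map_mem_closure hLcont (hGSet ▸ hUbG) hmaps
    simp only [hLUb] at hmem
    rw [hGUR]
    exact hmem
end
end
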